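/- arXiv:0708.0824 — 4 statements merged into one kernel-verified Lean document; each statement's English description precedes it below -/
import Mathlib

section
/- Let (X,d) be an L-linearly connected, N-doubling, complete metric space, let r > 0, and let 𝒩 be a maximal r-separated subset of X. Then there exists a collection of compact connected sets {V_x}_{x ∈ 𝒩} such that: (1) if x, y ∈ 𝒩 and d(x,y) ≤ 2r then y ∈ V_x; (2) diam(V_x) ≤ 5Lr for all x ∈ 𝒩; and (3) there is δ = δ(L,N) > 0 such that for all x, y ∈ 𝒩, if V_x ∩ V_y = ∅ then d(V_x, V_y) > δr. -/
open Metric Set Filter Topology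

/-- A metric space is `N`-doubling if every ball can be covered by at most `N`
balls of half the radius. -/
def Doubling (X : Type*) [MetricSpace X] (N : ℕ) : Prop :=
  ∀ (x : X) (r : ℝ), ∃ t : Finset X, t.card ≤ N ∧
    ball x r ⊆ ⋃ y ∈ t, ball y (r / 2)

/-- A set `S` is `r`-separated if distinct points of `S` are at distance at least `r`. -/
def IsSep {X : Type*} [MetricSpace X] (r : ℝ) (S : Set X) : Prop :=
  S.Pairwise (fun x y => r ≤ dist x y)

/-- `X` is `L`-linearly connected: any two points lie in a compact connected set of
diameter at most `L` times their distance. -/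
def LinearlyConnected (X : Type*) [MetricSpace X] (L : ℝ) : Prop :=
  ∀ x y : X, ∃ J : Set X, IsCompact J ∧ IsConnected J ∧ x ∈ J ∧ y ∈ J ∧
    diam J ≤ L * dist x y

/-- `f` parametrizes an arc: continuous and injective on `[0,1]`. -/
def IsArcParam {X : Type*} [MetricSpace X] (f : ℝ → X) : Prop :=
  ContinuousOn f (Icc 0 1) ∧ InjOn f (Icc 0 1)

/-- The arc parametrized by `g` `ε`-follows the arc parametrized by `f`: there is a
(coarse, not necessarily continuous) reparametrization `p` sending endpoints to
endpoints such that each subarc `g '' uIcc s t` lies in the `ε`-neighborhood of the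
corresponding subarc `f '' uIcc (p s) (p t)`. -/
def Follows {X : Type*} [MetricSpace X] (ε : ℝ) (g f : ℝ → X) : Prop :=
  ∃ p : ℝ → ℝ, MapsTo p (Icc 0 1) (Icc 0 1) ∧ p 0 = 0 ∧ p 1 = 1 ∧
    ∀ s ∈ Icc (0:ℝ) 1, ∀ t ∈ Icc (0:ℝ) 1,
      g '' uIcc s t ⊆ thickening ε (f '' uIcc (p s) (p t))

/-- Infimal distance between two subsets of a metric space. -/
noncomputable def SetDist {X : Type*} [MetricSpace X] (U V : Set X) : ℝ :=
  sInf (Set.image2 dist U V)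

namespace Stmt7

variable {X : Type*} [MetricSpace X] {L : ℝ}

/-! ### chosen connecting continua -/

noncomputable def conn (hLC : LinearlyConnected X L) (p q : X) : Set X := (hLC p q).choose

lemma conn_compact (hLC : LinearlyConnected X L) (p q : X) : IsCompact (conn hLC p q) :=
  (hLC p q).choose_spec.1

lemma conn_connected (hLC : LinearlyConnected X L) (p q : X) : IsConnected (conn hLC p q) :=
  (hLC p q).choose_spec.2.1

lemma conn_mem_left (hLC : LinearlyConnected X L) (p q : X) : p ∈ conn hLC p q :=
  (hLC p q).choose_spec.2.2.1

lemma conn_mem_right (hLC : LinearlyConnected X L) (p q : X) : q ∈ conn hLC p q :=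
  (hLC p q).choose_spec.2.2.2.1

lemma conn_diam (hLC : LinearlyConnected X L) (p q : X) :
    diam (conn hLC p q) ≤ L * dist p q :=
  (hLC p q).choose_spec.2.2.2.2

lemma conn_dist (hLC : LinearlyConnected X L) (p q : X) {w : X} (hw : w ∈ conn hLC p q) :
    dist w p ≤ L * dist p q :=
  le_trans (Metric.dist_le_diam_of_mem (conn_compact hLC p q).isBounded hw (conn_mem_left hLC p q))
    (conn_diam hLC p q)

/-! ### the core of a piece: arcs to all `2r`-neighbours -/

noncomputable def core (hLC : LinearlyConnected X L) (𝒩 : Set X) (r : ℝ) (c : X) : Set X :=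
  {c} ∪ ⋃ a ∈ 𝒩 ∩ closedBall c (2*r), conn hLC c a

lemma mem_core_self (hLC : LinearlyConnected X L) (𝒩 : Set X) (r : ℝ) (c : X) :
    c ∈ core hLC 𝒩 r c := Or.inl rfl

lemma mem_core_nbr (hLC : LinearlyConnected X L) (𝒩 : Set X) (r : ℝ) (c : X)
    {y : X} (hy : y ∈ 𝒩) (hd : dist c y ≤ 2*r) : y ∈ core hLC 𝒩 r c := by
  refine Or.inr ?_
  refine mem_iUnion₂.2 ⟨y, ⟨hy, ?_⟩, conn_mem_right hLC c y⟩
  simpa [mem_closedBall, dist_comm] using hd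

lemma core_subset (hLC : LinearlyConnected X L) (𝒩 : Set X) {r : ℝ} (c : X)
    (hL : 1 ≤ L) (hr : 0 < r) : core hLC 𝒩 r c ⊆ closedBall c (2*L*r) := by
  have hL0 : (0:ℝ) ≤ L := le_trans zero_le_one hL
  intro w hw
  rcases hw with hw | hw
  · rcases hw with rfl
    simp only [mem_closedBall, dist_self]
    positivity
  · rcases mem_iUnion₂.1 hw with ⟨a, ⟨_, ha2⟩, hwa⟩
    have h1 : dist w c ≤ L * dist c a := by
      have := conn_dist hLC c a (w := w) hwa
      -- this : dist w c ≤ L * dist c a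
      exact this
    have h2 : dist c a ≤ 2*r := by
      rw [dist_comm]; exact mem_closedBall.1 ha2
    have : L * dist c a ≤ L * (2*r) := by
      exact mul_le_mul_of_nonneg_left h2 hL0
    simp only [mem_closedBall]
    calc dist w c ≤ L * (2*r) := le_trans h1 this
      _ = 2*L*r := by ring

lemma core_compact (hLC : LinearlyConnected X L) {𝒩 : Set X} {r : ℝ} (c : X)
    (hfin : (𝒩 ∩ closedBall c (2*r)).Finite) : IsCompact (core hLC 𝒩 r c) :=
  (isCompact_singleton).union
    (hfin.isCompact_biUnion (fun a _ => conn_compact hLC c a))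

lemma core_connected (hLC : LinearlyConnected X L) (𝒩 : Set X) (r : ℝ) (c : X) :
    IsConnected (core hLC 𝒩 r c) := by
  refine ⟨⟨c, mem_core_self hLC 𝒩 r c⟩, ?_⟩
  have he : core hLC 𝒩 r c =
      ⋃₀ (insert {c} ((fun a => conn hLC c a) '' (𝒩 ∩ closedBall c (2*r)))) := by
    rw [sUnion_insert, sUnion_image]
    rfl
  rw [he]
  refine isPreconnected_sUnion c _ ?_ ?_
  · rintro s (rfl | ⟨a, _, rfl⟩)
    · exact rfl
    · exact conn_mem_left hLC c a
  · rintro s (rfl | ⟨a, _, rfl⟩)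
    · exact isPreconnected_singleton
    · exact (conn_connected hLC c a).isPreconnected

/-! ### one absorption step -/

def condP (hLC : LinearlyConnected X L) (θ r cap : ℝ) (c : X) (n : ℕ)
    (prev : ℕ → Set X) (S : Set X) : Prop :=
  ∃ pq : X × X, (∃ m, m < n ∧ pq.2 ∈ prev m ∧ S ∩ prev m = ∅) ∧ pq.1 ∈ S ∧
    dist pq.1 pq.2 ≤ 2*θ*r ∧ conn hLC pq.1 pq.2 ⊆ closedBall c cap

open Classical in
noncomputable def stepS (hLC : LinearlyConnected X L) (θ r cap : ℝ) (c : X) (n : ℕ)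
    (prev : ℕ → Set X) (S : Set X) : Set X :=
  if h : condP hLC θ r cap c n prev S then S ∪ conn hLC h.choose.1 h.choose.2 else S

lemma subset_stepS (hLC : LinearlyConnected X L) (θ r cap : ℝ) (c : X) (n : ℕ)
    (prev : ℕ → Set X) (S : Set X) : S ⊆ stepS hLC θ r cap c n prev S := by
  unfold stepS
  split
  · exact subset_union_left
  · exact subset_rfl

lemma stepS_of_neg (hLC : LinearlyConnected X L) {θ r cap : ℝ} {c : X} {n : ℕ}
    {prev : ℕ → Set X} {S : Set X} (h : ¬ condP hLC θ r cap c n prev S) :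
    stepS hLC θ r cap c n prev S = S := by
  unfold stepS; exact dif_neg h

lemma stepS_spec (hLC : LinearlyConnected X L) {θ r cap : ℝ} {c : X} {n : ℕ}
    {prev : ℕ → Set X} {S : Set X} (h : condP hLC θ r cap c n prev S) :
    ∃ p q m, m < n ∧ q ∈ prev m ∧ S ∩ prev m = ∅ ∧ p ∈ S ∧ dist p q ≤ 2*θ*r ∧
      conn hLC p q ⊆ closedBall c cap ∧
      stepS hLC θ r cap c n prev S = S ∪ conn hLC p q := by
  obtain ⟨m, hm1, hm2, hm3⟩ := h.choose_spec.1
  refine ⟨h.choose.1, h.choose.2, m, hm1, hm2, hm3, h.choose_spec.2.1,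
    h.choose_spec.2.2.1, h.choose_spec.2.2.2, ?_⟩
  unfold stepS; exact dif_pos h

/-! ### the absorption loop -/

noncomputable def loopS (hLC : LinearlyConnected X L) (𝒩 : Set X) (r θ cap : ℝ) (c : X)
    (n : ℕ) (prev : ℕ → Set X) : ℕ → Set X
  | 0 => core hLC 𝒩 r c
  | (j+1) => stepS hLC θ r cap c n prev (loopS hLC 𝒩 r θ cap c n prev j)

lemma loopS_zero (hLC : LinearlyConnected X L) (𝒩 : Set X) (r θ cap : ℝ) (c : X)
    (n : ℕ) (prev : ℕ → Set X) : loopS hLC 𝒩 r θ cap c n prev 0 = core hLC 𝒩 r c := rfl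

lemma loopS_succ (hLC : LinearlyConnected X L) (𝒩 : Set X) (r θ cap : ℝ) (c : X)
    (n : ℕ) (prev : ℕ → Set X) (j : ℕ) :
    loopS hLC 𝒩 r θ cap c n prev (j+1) =
      stepS hLC θ r cap c n prev (loopS hLC 𝒩 r θ cap c n prev j) := rfl

lemma loopS_mono (hLC : LinearlyConnected X L) (𝒩 : Set X) (r θ cap : ℝ) (c : X)
    (n : ℕ) (prev : ℕ → Set X) {j k : ℕ} (hjk : j ≤ k) :
    loopS hLC 𝒩 r θ cap c n prev j ⊆ loopS hLC 𝒩 r θ cap c n prev k := by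
  induction k with
  | zero => simp_all
  | succ k ih =>
    rcases Nat.lt_or_ge j (k+1) with h | h
    · exact (ih (Nat.lt_succ_iff.1 h)).trans
        (subset_stepS hLC θ r cap c n prev _)
    · have : j = k+1 := le_antisymm hjk h
      subst this; exact subset_rfl

lemma loopS_stall (hLC : LinearlyConnected X L) (𝒩 : Set X) (r θ cap : ℝ) (c : X)
    (n : ℕ) (prev : ℕ → Set X) {j : ℕ}
    (h : ¬ condP hLC θ r cap c n prev (loopS hLC 𝒩 r θ cap c n prev j)) :
    ∀ k, j ≤ k → loopS hLC 𝒩 r θ cap c n prev k = loopS hLC 𝒩 r θ cap c n prev j := by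
  intro k hk
  induction k with
  | zero => cases Nat.le_zero.1 hk; rfl
  | succ k ih =>
    rcases Nat.lt_or_ge j (k+1) with h' | h'
    · have hk' := Nat.lt_succ_iff.1 h'
      rw [loopS_succ, ih hk']
      exact stepS_of_neg hLC h
    · have : j = k+1 := le_antisymm hk h'
      rw [this]


/-! ### loop invariants -/

lemma loopS_subset_ball (hLC : LinearlyConnected X L) (𝒩 : Set X) {r θ cap : ℝ} {c : X}
    {n : ℕ} {prev : ℕ → Set X} (hcore : core hLC 𝒩 r c ⊆ closedBall c cap) :
    ∀ j, loopS hLC 𝒩 r θ cap c n prev j ⊆ closedBall c cap := by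
  intro j
  induction j with
  | zero => exact hcore
  | succ j ih =>
    rw [loopS_succ]
    by_cases h : condP hLC θ r cap c n prev (loopS hLC 𝒩 r θ cap c n prev j)
    · obtain ⟨p, q, m, _, _, _, _, _, hconn, heq⟩ := stepS_spec hLC h
      rw [heq]
      exact union_subset ih hconn
    · rw [stepS_of_neg hLC h]; exact ih

lemma loopS_compact (hLC : LinearlyConnected X L) {𝒩 : Set X} {r θ cap : ℝ} {c : X}
    {n : ℕ} {prev : ℕ → Set X} (hcore : IsCompact (core hLC 𝒩 r c)) :
    ∀ j, IsCompact (loopS hLC 𝒩 r θ cap c n prev j) := by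
  intro j
  induction j with
  | zero => exact hcore
  | succ j ih =>
    rw [loopS_succ]
    by_cases h : condP hLC θ r cap c n prev (loopS hLC 𝒩 r θ cap c n prev j)
    · obtain ⟨p, q, m, _, _, _, _, _, _, heq⟩ := stepS_spec hLC h
      rw [heq]
      exact ih.union (conn_compact hLC p q)
    · rw [stepS_of_neg hLC h]; exact ih

lemma loopS_connected (hLC : LinearlyConnected X L) {𝒩 : Set X} {r θ cap : ℝ} {c : X}
    {n : ℕ} {prev : ℕ → Set X} (hcore : IsConnected (core hLC 𝒩 r c)) :
    ∀ j, IsConnected (loopS hLC 𝒩 r θ cap c n prev j) := by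
  intro j
  induction j with
  | zero => exact hcore
  | succ j ih =>
    rw [loopS_succ]
    by_cases h : condP hLC θ r cap c n prev (loopS hLC 𝒩 r θ cap c n prev j)
    · obtain ⟨p, q, m, _, _, _, hp, _, _, heq⟩ := stepS_spec hLC h
      rw [heq]
      exact ih.union ⟨p, hp, conn_mem_left hLC p q⟩ (conn_connected hLC p q)
    · rw [stepS_of_neg hLC h]; exact ih

/-! ### the pieces -/

open Classical in
noncomputable def pieceAux (hLC : LinearlyConnected X L) (𝒩 : Set X) (r θ cap : ℝ)
    (g : X → ℕ) : ℕ → ℕ → Set X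
  | 0 => fun _ => ∅
  | (n+1) => fun m =>
      if m = n then
        if h : ∃ z, z ∈ 𝒩 ∧ g z = n then
          loopS hLC 𝒩 r θ cap h.choose n (pieceAux hLC 𝒩 r θ cap g n) n
        else ∅
      else pieceAux hLC 𝒩 r θ cap g n m

noncomputable def piece (hLC : LinearlyConnected X L) (𝒩 : Set X) (r θ cap : ℝ)
    (g : X → ℕ) (n : ℕ) : Set X := pieceAux hLC 𝒩 r θ cap g (n+1) n

lemma pieceAux_eq_piece (hLC : LinearlyConnected X L) (𝒩 : Set X) (r θ cap : ℝ)
    (g : X → ℕ) : ∀ {n m : ℕ}, m < n →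
      pieceAux hLC 𝒩 r θ cap g n m = piece hLC 𝒩 r θ cap g m := by
  intro n
  induction n with
  | zero => intro m hm; omega
  | succ n ih =>
    intro m hm
    by_cases h : m = n
    · subst h; rfl
    · have hmn : m < n := by omega
      have : pieceAux hLC 𝒩 r θ cap g (n+1) m = pieceAux hLC 𝒩 r θ cap g n m := by
        simp only [pieceAux, if_neg h]
      rw [this, ih hmn]

lemma piece_eq_empty (hLC : LinearlyConnected X L) (𝒩 : Set X) (r θ cap : ℝ)
    (g : X → ℕ) {n : ℕ} (h : ¬ ∃ z, z ∈ 𝒩 ∧ g z = n) :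
    piece hLC 𝒩 r θ cap g n = ∅ := by
  show pieceAux hLC 𝒩 r θ cap g (n+1) n = ∅
  simp only [pieceAux, if_pos, dif_neg h]

lemma piece_eq_loopS (hLC : LinearlyConnected X L) (𝒩 : Set X) (r θ cap : ℝ)
    (g : X → ℕ) (hg : Set.InjOn g 𝒩) {n : ℕ} {z : X} (hz : z ∈ 𝒩) (hzn : g z = n) :
    piece hLC 𝒩 r θ cap g n =
      loopS hLC 𝒩 r θ cap z n (pieceAux hLC 𝒩 r θ cap g n) n := by
  have hex : ∃ z', z' ∈ 𝒩 ∧ g z' = n := ⟨z, hz, hzn⟩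
  have hcz : hex.choose = z :=
    hg hex.choose_spec.1 hz (hex.choose_spec.2.trans hzn.symm)
  show pieceAux hLC 𝒩 r θ cap g (n+1) n = _
  simp only [pieceAux, if_pos]
  rw [dif_pos hex, hcz]

/-! ### counting lemmas from doubling -/

lemma doubling_iter {N : ℕ} (hN : Doubling X N) (k : ℕ) (x : X) (R : ℝ) :
    ∃ t : Finset X, t.card ≤ N ^ k ∧ ball x R ⊆ ⋃ y ∈ t, ball y (R / 2 ^ k) := by
  induction k with
  | zero => exact ⟨{x}, by simp, by simp⟩
  | succ k ih =>
    obtain ⟨t, htc, hts⟩ := ih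
    choose s hsc hss using fun y : X => hN y (R / 2 ^ k)
    classical
    refine ⟨t.biUnion fun y => s y, ?_, ?_⟩
    · calc (t.biUnion fun y => s y).card ≤ ∑ y ∈ t, (s y).card := Finset.card_biUnion_le
        _ ≤ ∑ _y ∈ t, N := Finset.sum_le_sum fun y _ => hsc y
        _ = t.card * N := by rw [Finset.sum_const, smul_eq_mul]
        _ ≤ N ^ k * N := Nat.mul_le_mul_right _ htc
        _ = N ^ (k+1) := (pow_succ N k).symm
    · intro w hw
      obtain hw2 := hts hw
      simp only [mem_iUnion, exists_prop] at hw2 ⊢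
      obtain ⟨y, hyt, hy⟩ := hw2
      have h3 := hss y hy
      simp only [mem_iUnion, exists_prop] at h3
      obtain ⟨u, hu, hwu⟩ := h3
      refine ⟨u, Finset.mem_biUnion.2 ⟨y, hyt, hu⟩, ?_⟩
      have he : R / 2 ^ k / 2 = R / 2 ^ (k+1) := by ring
      rwa [he] at hwu

lemma sep_count {N : ℕ} (hN : Doubling X N) {r : ℝ} (hr : 0 < r) {S : Set X}
    (hsep : IsSep r S) (c : X) (R : ℝ) (k : ℕ) (hk : 2 * (R + r) ≤ r * 2 ^ k) :
    (S ∩ closedBall c R).Finite ∧ (S ∩ closedBall c R).ncard ≤ N ^ k := by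
  classical
  obtain ⟨t, htc, hts⟩ := doubling_iter hN k c (R + r)
  set ρ : ℝ := (R + r) / 2 ^ k with hρ
  have hρr : 2 * ρ ≤ r := by
    show 2 * ((R + r) / 2 ^ k) ≤ r
    have hinv : (0:ℝ) ≤ ((2:ℝ) ^ k)⁻¹ := by positivity
    have h2k : (0:ℝ) < 2 ^ k := by positivity
    calc 2 * ((R + r) / 2 ^ k) = (2 * (R + r)) * ((2:ℝ) ^ k)⁻¹ := by ring
      _ ≤ (r * 2 ^ k) * ((2:ℝ) ^ k)⁻¹ := mul_le_mul_of_nonneg_right hk hinv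
      _ = r := by field_simp
  have hsub : S ∩ closedBall c R ⊆ ⋃ y ∈ t, S ∩ ball y ρ := by
    intro p hp
    have : p ∈ ball c (R + r) := by
      have := hp.2
      simp only [mem_closedBall] at this
      simp only [mem_ball]
      linarith
    have := hts this
    simp only [mem_iUnion, exists_prop] at this ⊢
    obtain ⟨y, hy1, hy2⟩ := this
    exact ⟨y, hy1, hp.1, hy2⟩
  have hsmall : ∀ y : X, (S ∩ ball y ρ).Subsingleton := by
    intro y p hp q hq
    by_contra hne
    have hsep' := hsep hp.1 hq.1 hne
    have h1 : dist p y < ρ := mem_ball.1 hp.2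
    have h2 : dist q y < ρ := mem_ball.1 hq.2
    have : dist p q < r := by
      calc dist p q ≤ dist p y + dist q y := dist_triangle_right p q y
        _ < ρ + ρ := by linarith
        _ ≤ r := by linarith
    linarith
  have hfin : (S ∩ closedBall c R).Finite := by
    refine Set.Finite.subset ?_ hsub
    exact t.finite_toSet.biUnion (fun y _ => (hsmall y).finite)
  refine ⟨hfin, ?_⟩
  -- map each point to a covering center
  set F : X → X := fun p => if h : ∃ y ∈ t, p ∈ ball y ρ then h.choose else c with hF
  have hFt : ∀ p ∈ S ∩ closedBall c R, F p ∈ (t : Set X) := by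
    intro p hp
    have := hsub hp
    simp only [mem_iUnion, exists_prop] at this
    obtain ⟨y, hy1, hy2⟩ := this
    have hex : ∃ y ∈ t, p ∈ ball y ρ := ⟨y, hy1, hy2.2⟩
    simp only [hF, dif_pos hex]
    exact hex.choose_spec.1
  have hFb : ∀ p ∈ S ∩ closedBall c R, p ∈ ball (F p) ρ := by
    intro p hp
    have := hsub hp
    simp only [mem_iUnion, exists_prop] at this
    obtain ⟨y, hy1, hy2⟩ := this
    have hex : ∃ y ∈ t, p ∈ ball y ρ := ⟨y, hy1, hy2.2⟩
    simp only [hF, dif_pos hex]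
    exact hex.choose_spec.2
  have hinj : Set.InjOn F (S ∩ closedBall c R) := by
    intro p hp q hq hFpq
    by_contra hne
    have hsep' := hsep hp.1 hq.1 hne
    have h1 := hFb p hp
    have h2 := hFb q hq
    rw [hFpq] at h1
    have : dist p q < r := by
      calc dist p q ≤ dist p (F q) + dist q (F q) := dist_triangle_right p q (F q)
        _ < ρ + ρ := by
            have := mem_ball.1 h1; have := mem_ball.1 h2; linarith [mem_ball.1 h1, mem_ball.1 h2]
        _ ≤ r := by linarith
    linarith
  calc (S ∩ closedBall c R).ncard ≤ (t : Set X).ncard :=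
        Set.ncard_le_ncard_of_injOn F hFt hinj t.finite_toSet
    _ = t.card := Set.ncard_coe_finset t
    _ ≤ N ^ k := htc

/-! ### main properties of the pieces -/

lemma piece_props
    {r θ cap : ℝ} (hLC : LinearlyConnected X L) (hL : 1 ≤ L) (hr : 0 < r)
    {𝒩 : Set X} (hsep : IsSep r 𝒩)
    (g : X → ℕ) (hg : Set.InjOn g 𝒩) (M : ℕ)
    (hpoolfin : ∀ c : X, (𝒩 ∩ closedBall c (5*L*r)).Finite)
    (hpool : ∀ c : X, (𝒩 ∩ closedBall c (5*L*r)).ncard ≤ M)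
    (hnbrfin : ∀ c : X, (𝒩 ∩ closedBall c (2*r)).Finite)
    (hθ : θ = 1/(8*((M:ℝ)+1)))
    (hcap : cap = 2*L*r + ((M:ℝ)+1)*(2*L*θ*r)) :
    ∀ n : ℕ, ∀ z, z ∈ 𝒩 → g z = n →
      piece hLC 𝒩 r θ cap g n ⊆ closedBall z cap ∧
      IsCompact (piece hLC 𝒩 r θ cap g n) ∧
      IsConnected (piece hLC 𝒩 r θ cap g n) ∧
      (∀ y ∈ 𝒩, dist z y ≤ 2*r → y ∈ piece hLC 𝒩 r θ cap g n) ∧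
      (∀ m, m < n →
        (piece hLC 𝒩 r θ cap g n ∩ piece hLC 𝒩 r θ cap g m).Nonempty ∨
        (∀ p ∈ piece hLC 𝒩 r θ cap g n, ∀ q ∈ piece hLC 𝒩 r θ cap g m,
          2*θ*r < dist p q)) := by
  intro n
  induction n using Nat.strong_induction_on with
  | _ n IH =>
  intro z hz hzn
  have hL0 : (0:ℝ) < L := lt_of_lt_of_le zero_lt_one hL
  have hθpos : 0 < θ := by rw [hθ]; positivity
  have hMcast : (0:ℝ) < (M:ℝ) + 1 := by positivity
  have hcap2 : 2*L*r ≤ cap := by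
    rw [hcap]
    have : (0:ℝ) ≤ ((M:ℝ)+1)*(2*L*θ*r) := by positivity
    linarith
  have hcapval : cap = 2*L*r + L*r/4 := by
    rw [hcap, hθ]
    field_simp
    ring
  set prev : ℕ → Set X := pieceAux hLC 𝒩 r θ cap g n with hprevdef
  have hprevm : ∀ m, m < n → prev m = piece hLC 𝒩 r θ cap g m :=
    fun m hm => pieceAux_eq_piece hLC 𝒩 r θ cap g hm
  set Lp : ℕ → Set X := loopS hLC 𝒩 r θ cap z n prev with hLpdef
  have hpe : piece hLC 𝒩 r θ cap g n = Lp n :=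
    piece_eq_loopS hLC 𝒩 r θ cap g hg hz hzn
  have hcoresub : core hLC 𝒩 r z ⊆ closedBall z cap :=
    (core_subset hLC 𝒩 z hL hr).trans (closedBall_subset_closedBall hcap2)
  have hball : ∀ j, Lp j ⊆ closedBall z cap :=
    loopS_subset_ball hLC 𝒩 hcoresub
  have hcpt : ∀ j, IsCompact (Lp j) :=
    loopS_compact hLC (core_compact hLC z (hnbrfin z))
  have hconn : ∀ j, IsConnected (Lp j) :=
    loopS_connected hLC (core_connected hLC 𝒩 r z)
  have hmemz : ∀ y ∈ 𝒩, dist z y ≤ 2*r → y ∈ Lp n := fun y hy hd =>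
    loopS_mono hLC 𝒩 r θ cap z n prev (Nat.zero_le n) (mem_core_nbr hLC 𝒩 r z hy hd)
  set U : ℕ → Set ℕ := fun j => {m | m < n ∧ (prev m ∩ Lp j).Nonempty} with hUdef
  have hUfin : ∀ j, (U j).Finite := by
    intro j
    refine (Finset.range n).finite_toSet.subset ?_
    intro m hm
    simpa using hm.1
  have hUmono : ∀ {j k : ℕ}, j ≤ k → U j ⊆ U k := by
    intro j k hjk m hm
    obtain ⟨hm1, w, hw1, hw2⟩ := hm
    exact ⟨hm1, w, hw1, loopS_mono hLC 𝒩 r θ cap z n prev hjk hw2⟩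
  have hstep : ∀ j, condP hLC θ r cap z n prev (Lp j) →
      ∃ m, m < n ∧ m ∉ U j ∧ m ∈ U (j+1) := by
    intro j hA
    obtain ⟨p, q, m, hmn, hq, hdis, hp, hd, hcb, heq⟩ := stepS_spec hLC hA
    refine ⟨m, hmn, ?_, hmn, q, hq, ?_⟩
    · rintro ⟨-, w, hw1, hw2⟩
      exact (Set.eq_empty_iff_forall_notMem.1 hdis w) ⟨hw2, hw1⟩
    · show q ∈ Lp (j+1)
      rw [hLpdef, loopS_succ, ← hLpdef, heq]
      exact Or.inr (conn_mem_right hLC p q)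
  have hgrow : ∀ j, condP hLC θ r cap z n prev (Lp j) →
      (U j).ncard + 1 ≤ (U (j+1)).ncard := by
    intro j hA
    obtain ⟨m, hmn, hnot, hmem⟩ := hstep j hA
    have h1 : insert m (U j) ⊆ U (j+1) := insert_subset hmem (hUmono (Nat.le_succ j))
    calc (U j).ncard + 1 = (insert m (U j)).ncard :=
          (Set.ncard_insert_of_notMem hnot (hUfin j)).symm
      _ ≤ (U (j+1)).ncard := Set.ncard_le_ncard h1 (hUfin (j+1))
  have hUM : ∀ j, (U j).ncard ≤ M := by
    intro j
    classical
    set φ : ℕ → X := fun m => if h : ∃ zz, zz ∈ 𝒩 ∧ g zz = m then h.choose else z with hφ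
    have hkey : ∀ m ∈ U j, φ m ∈ 𝒩 ∩ closedBall z (5*L*r) ∧ g (φ m) = m := by
      intro m hm
      obtain ⟨hmn, w, hw1, hw2⟩ := hm
      have hne : ∃ zz, zz ∈ 𝒩 ∧ g zz = m := by
        by_contra hcon
        rw [hprevm m hmn, piece_eq_empty hLC 𝒩 r θ cap g hcon] at hw1
        exact hw1
      have hφm : φ m = hne.choose := by
        simp only [hφ, dif_pos hne]
      obtain ⟨hzm𝒩, hzmg⟩ := hne.choose_spec
      have hpm := IH m hmn hne.choose hzm𝒩 hzmg
      have hw1' : w ∈ piece hLC 𝒩 r θ cap g m := by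
        rw [← hprevm m hmn]; exact hw1
      have hd1 : dist w hne.choose ≤ cap := mem_closedBall.1 (hpm.1 hw1')
      have hd2 : dist w z ≤ cap := mem_closedBall.1 (hball j hw2)
      have hcc : cap + cap ≤ 5*L*r := by
        rw [hcapval]
        have : (0:ℝ) < L * r := by positivity
        linarith
      refine ⟨⟨by rw [hφm]; exact hzm𝒩, ?_⟩, by rw [hφm]; exact hzmg⟩
      simp only [mem_closedBall]
      rw [hφm]
      calc dist hne.choose z ≤ dist hne.choose w + dist w z := dist_triangle _ _ _
        _ ≤ cap + cap := add_le_add (by rw [dist_comm]; exact hd1) hd2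
        _ ≤ 5*L*r := hcc
    have hinj : Set.InjOn φ (U j) := by
      intro m1 hm1 m2 hm2 heq
      have h1 := (hkey m1 hm1).2
      have h2 := (hkey m2 hm2).2
      rw [← h1, ← h2, heq]
    calc (U j).ncard ≤ (𝒩 ∩ closedBall z (5*L*r)).ncard :=
          Set.ncard_le_ncard_of_injOn φ (fun m hm => (hkey m hm).1) hinj (hpoolfin z)
      _ ≤ M := hpool z
  have hINV : ∀ j, Lp j ⊆
      closedBall z (2*L*r + ((U j).ncard : ℝ) * (2*L*θ*r)) := by
    intro j
    induction j with
    | zero =>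
      have h0 : (0:ℝ) ≤ ((U 0).ncard : ℝ) * (2*L*θ*r) := by positivity
      exact (core_subset hLC 𝒩 z hL hr).trans
        (closedBall_subset_closedBall (by linarith))
    | succ j ih =>
      have hnn : (0:ℝ) ≤ 2*L*θ*r := by positivity
      by_cases hA : condP hLC θ r cap z n prev (Lp j)
      · obtain ⟨p, q, m, hmn, hq, hdis, hp, hd, hcb, heq⟩ := stepS_spec hLC hA
        have hcardle : ((U j).ncard : ℝ) + 1 ≤ ((U (j+1)).ncard : ℝ) := by
          exact_mod_cast hgrow j hA
        have hLp1 : Lp (j+1) = Lp j ∪ conn hLC p q := by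
          rw [hLpdef, loopS_succ, ← hLpdef, heq]
        rw [hLp1]
        intro w hw
        simp only [mem_closedBall]
        rcases hw with hw | hw
        · have := mem_closedBall.1 (ih hw)
          nlinarith
        · have h1 : dist w p ≤ L * dist p q := conn_dist hLC p q hw
          have h2 : dist p z ≤ 2*L*r + ((U j).ncard : ℝ) * (2*L*θ*r) :=
            mem_closedBall.1 (ih hp)
          have h3 : dist w z ≤ dist w p + dist p z := dist_triangle _ _ _
          have h4 : L * dist p q ≤ L * (2*θ*r) :=
            mul_le_mul_of_nonneg_left hd (le_of_lt hL0)
          nlinarith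
      · have : Lp (j+1) = Lp j := by
          rw [hLpdef, loopS_succ, ← hLpdef, stepS_of_neg hLC hA]
        rw [this]
        refine ih.trans (closedBall_subset_closedBall ?_)
        have hc : ((U j).ncard : ℝ) ≤ ((U (j+1)).ncard : ℝ) := by
          exact_mod_cast Set.ncard_le_ncard (hUmono (Nat.le_succ j)) (hUfin (j+1))
        nlinarith
  have hexit : ∀ m, m < n → (Lp n ∩ prev m).Nonempty ∨
      (∀ p ∈ Lp n, ∀ q ∈ prev m, 2*θ*r < dist p q) := by
    by_cases hall : ∀ j, j < n → condP hLC θ r cap z n prev (Lp j)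
    · have hcard : ∀ j, j ≤ n → j ≤ (U j).ncard := by
        intro j
        induction j with
        | zero => intro _; exact Nat.zero_le _
        | succ j ihj =>
          intro hjn
          have h1 := hgrow j (hall j (by omega))
          have h2 := ihj (by omega)
          omega
      have h1 : n ≤ (U n).ncard := hcard n le_rfl
      have h2 : U n ⊆ ↑(Finset.range n) := by
        intro m hm
        simpa using hm.1
      have h3 : (↑(Finset.range n) : Set ℕ).ncard = n := by
        rw [Set.ncard_coe_finset, Finset.card_range]
      have hUeq : U n = ↑(Finset.range n) :=
        Set.eq_of_subset_of_ncard_le h2 (by omega) (Finset.range n).finite_toSet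
      intro m hm
      left
      have hmem : m ∈ U n := by
        rw [hUeq]
        simpa using hm
      obtain ⟨-, w, hw1, hw2⟩ := hmem
      exact ⟨w, hw2, hw1⟩
    · push_neg at hall
      obtain ⟨j, hjn, hAj⟩ := hall
      have hstab : Lp n = Lp j :=
        loopS_stall hLC 𝒩 r θ cap z n prev hAj n (le_of_lt hjn)
      intro m hm
      by_cases hdis : (Lp n ∩ prev m).Nonempty
      · left; exact hdis
      right
      intro p hp q hq
      by_contra hle
      push_neg at hle
      apply hAj
      have hpj : p ∈ Lp j := hstab ▸ hp
      refine ⟨(p, q), ⟨m, hm, hq, ?_⟩, hpj, hle, ?_⟩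
      · rw [← hstab]
        exact Set.not_nonempty_iff_eq_empty.1 hdis
      · intro w hw
        have h1 : dist w p ≤ L * dist p q := conn_dist hLC p q hw
        have h2 : dist p z ≤ 2*L*r + ((U j).ncard : ℝ) * (2*L*θ*r) :=
          mem_closedBall.1 (hINV j hpj)
        have h3 : ((U j).ncard : ℝ) ≤ (M:ℝ) := by exact_mod_cast hUM j
        have h4 : L * dist p q ≤ L * (2*θ*r) :=
          mul_le_mul_of_nonneg_left hle (le_of_lt hL0)
        have h5 : dist w z ≤ dist w p + dist p z := dist_triangle _ _ _
        have hnn : (0:ℝ) ≤ 2*L*θ*r := by positivity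
        simp only [mem_closedBall]
        rw [hcap]
        nlinarith [mul_le_mul_of_nonneg_right h3 hnn]
  refine ⟨?_, ?_, ?_, ?_, ?_⟩
  · rw [hpe]; exact hball n
  · rw [hpe]; exact hcpt n
  · rw [hpe]; exact hconn n
  · intro y hy hd
    rw [hpe]; exact hmemz y hy hd
  · intro m hm
    rcases hexit m hm with h | h
    · left
      rw [hpe, ← hprevm m hm]
      exact h
    · right
      intro p hp q hq
      rw [hpe] at hp
      rw [← hprevm m hm] at hq
      exact h p hp q hq

end Stmt7

open Stmt7

/-- Construction of the connected "net pieces" `V_x`: there is `δ = δ(L,N) > 0` such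
that for every `r > 0` and maximal `r`-separated set `𝒩` there are compact connected
sets `V x` satisfying (1) `d(x,y) ≤ 2r → y ∈ V x`, (2) `diam (V x) ≤ 5 L r`, and
(3) disjoint pieces are at distance `> δ r`. -/
theorem stmt7 {X : Type*} [MetricSpace X] [CompleteSpace X] {N : ℕ}
    (hN : Doubling X N) {L : ℝ} (hL : 1 ≤ L) (hLC : LinearlyConnected X L) :
    ∃ δ : ℝ, 0 < δ ∧ ∀ r : ℝ, 0 < r → ∀ 𝒩 : Set X, IsSep r 𝒩 →
      (∀ z : X, ∃ x ∈ 𝒩, dist z x < r) →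
      ∃ V : X → Set X,
        (∀ x ∈ 𝒩, IsCompact (V x) ∧ IsConnected (V x) ∧ diam (V x) ≤ 5 * L * r) ∧
        (∀ x ∈ 𝒩, ∀ y ∈ 𝒩, dist x y ≤ 2 * r → y ∈ V x) ∧
        (∀ x ∈ 𝒩, ∀ y ∈ 𝒩, V x ∩ V y = ∅ → δ * r < SetDist (V x) (V y)) := by
  classical
  have hL0 : (0:ℝ) < L := lt_of_lt_of_le zero_lt_one hL
  obtain ⟨K, hK⟩ : ∃ k : ℕ, 12*L < (2:ℝ)^k := pow_unbounded_of_one_lt (12*L) one_lt_two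
  set M : ℕ := N^K with hMdef
  refine ⟨1/(8*((M:ℝ)+1)), by positivity, ?_⟩
  intro r hr 𝒩 hsep hmax
  set θ : ℝ := 1/(8*((M:ℝ)+1)) with hθdef
  set cap : ℝ := 2*L*r + ((M:ℝ)+1)*(2*L*θ*r) with hcapdef
  have hθpos : (0:ℝ) < θ := by rw [hθdef]; positivity
  -- counting facts
  have hpool : ∀ c : X, (𝒩 ∩ closedBall c (5*L*r)).Finite ∧
      (𝒩 ∩ closedBall c (5*L*r)).ncard ≤ M := by
    intro c
    refine sep_count hN hr hsep c (5*L*r) K ?_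
    calc 2*(5*L*r+r) = (10*L+2)*r := by ring
      _ ≤ (12*L)*r := by nlinarith
      _ ≤ 2^K * r := by nlinarith
      _ = r * 2^K := by ring
  have hnbr : ∀ c : X, (𝒩 ∩ closedBall c (2*r)).Finite := by
    intro c
    refine (sep_count hN hr hsep c (2*r) K ?_).1
    calc 2*(2*r+r) = 6*r := by ring
      _ ≤ (12*L)*r := by nlinarith
      _ ≤ 2^K * r := by nlinarith
      _ = r * 2^K := by ring
  -- countability of the net
  have hcount : 𝒩.Countable := by
    rcases isEmpty_or_nonempty X with hX | hX
    · have : 𝒩 = ∅ := Set.eq_empty_of_isEmpty 𝒩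
      simp [this]
    · obtain ⟨c₀⟩ := hX
      have hsub : 𝒩 ⊆ ⋃ n : ℕ, (𝒩 ∩ closedBall c₀ n) := by
        intro p hp
        refine mem_iUnion.2 ⟨⌈dist p c₀⌉₊, hp, ?_⟩
        simp only [mem_closedBall]
        exact Nat.le_ceil _
      refine Set.Countable.mono hsub ?_
      refine countable_iUnion (fun n => ?_)
      obtain ⟨k, hk⟩ : ∃ k:ℕ, 2*((n:ℝ)+r)/r < 2^k :=
        pow_unbounded_of_one_lt _ one_lt_two
      refine ((sep_count hN hr hsep c₀ n k ?_).1).countable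
      rw [div_lt_iff₀ hr] at hk
      linarith
  obtain ⟨f, hf⟩ := Set.countable_iff_exists_injective.1 hcount
  set g : X → ℕ := fun x => if hx : x ∈ 𝒩 then f ⟨x, hx⟩ else 0 with hgdef
  have hg : Set.InjOn g 𝒩 := by
    intro a ha b hb hab
    simp only [hgdef, dif_pos ha, dif_pos hb] at hab
    exact Subtype.mk_eq_mk.1 (hf hab)
  have props := piece_props hLC hL hr hsep g hg M (fun c => (hpool c).1)
    (fun c => (hpool c).2) hnbr hθdef hcapdef
  set V : X → Set X := fun x =>
    if hx : x ∈ 𝒩 then piece hLC 𝒩 r θ cap g (g x) else {x} with hVdef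
  have hVx : ∀ x, x ∈ 𝒩 → V x = piece hLC 𝒩 r θ cap g (g x) := by
    intro x hx
    simp only [hVdef, dif_pos hx]
  have hself : ∀ x, x ∈ 𝒩 → x ∈ V x := by
    intro x hx
    rw [hVx x hx]
    refine (props (g x) x hx rfl).2.2.2.1 x hx ?_
    simp only [dist_self]
    positivity
  have hcapval : cap = 2*L*r + L*r/4 := by
    rw [hcapdef, hθdef]
    field_simp
    ring
  refine ⟨V, ?_, ?_, ?_⟩
  · intro x hx
    have hp := props (g x) x hx rfl
    rw [hVx x hx]
    refine ⟨hp.2.1, hp.2.2.1, ?_⟩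
    refine Metric.diam_le_of_forall_dist_le (by positivity) ?_
    intro p hp' q hq'
    have h1 : dist p x ≤ cap := mem_closedBall.1 (hp.1 hp')
    have h2 : dist q x ≤ cap := mem_closedBall.1 (hp.1 hq')
    calc dist p q ≤ dist p x + dist q x := dist_triangle_right _ _ _
      _ ≤ cap + cap := add_le_add h1 h2
      _ ≤ 5*L*r := by rw [hcapval]; nlinarith
  · intro x hx y hy hd
    rw [hVx x hx]
    exact (props (g x) x hx rfl).2.2.2.1 y hy hd
  · intro x hx y hy hdisj
    by_cases hxy : x = y
    · exfalso
      subst hxy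
      rw [Set.inter_self] at hdisj
      have := hself x hx
      rw [hdisj] at this
      exact this
    have hgne : g x ≠ g y := fun h => hxy (hg hx hy h)
    have hVxx := hVx x hx
    have hVyy := hVx y hy
    have hxmem : x ∈ piece hLC 𝒩 r θ cap g (g x) := by rw [← hVxx]; exact hself x hx
    have hymem : y ∈ piece hLC 𝒩 r θ cap g (g y) := by rw [← hVyy]; exact hself y hy
    have himg : (Set.image2 dist (V x) (V y)).Nonempty :=
      ⟨dist x y, Set.mem_image2_of_mem (hself x hx) (hself y hy)⟩
    have key : ∀ p ∈ V x, ∀ q ∈ V y, 2*θ*r < dist p q := by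
      rcases Nat.lt_or_ge (g y) (g x) with hlt | hge
      · have hex := (props (g x) x hx rfl).2.2.2.2 (g y) hlt
        rcases hex with h | h
        · exfalso
          rw [hVxx, hVyy] at hdisj
          rw [hdisj] at h
          exact Set.not_nonempty_empty h
        · intro p hp' q hq'
          rw [hVxx] at hp'
          rw [hVyy] at hq'
          exact h p hp' q hq'
      · have hltxy : g x < g y := lt_of_le_of_ne hge hgne
        have hex := (props (g y) y hy rfl).2.2.2.2 (g x) hltxy
        rcases hex with h | h
        · exfalso
          rw [hVxx, hVyy] at hdisj
          rw [Set.inter_comm] at h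
          rw [hdisj] at h
          exact Set.not_nonempty_empty h
        · intro p hp' q hq'
          rw [hVxx] at hp'
          rw [hVyy] at hq'
          rw [dist_comm]
          exact h q hq' p hp'
    have hlow : 2*θ*r ≤ SetDist (V x) (V y) := by
      refine le_csInf himg ?_
      rintro b ⟨p, hp', q, hq', rfl⟩
      exact le_of_lt (key p hp' q hq')
    calc θ * r < 2*θ*r := by nlinarith
      _ ≤ SetDist (V x) (V y) := hlow
end

section
/- A compact connected metric space J with at least two points a, b is an arc with endpoints a and b if every point x ∈ J \ {a, b} is a cut point of J (i.e., J \ {x} is disconnected). -/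
open Metric Set Filter Topology

set_option linter.unusedSectionVars false
set_option maxHeartbeats 1000000



section MooreHelpers

variable {X : Type*} [TopologicalSpace X] [T1Space X]

/-- A preconnected set contained in a "relative separation" lies on one side. -/
lemma moore_aux_side {s u w : Set X} (hu : IsOpen u) (hw : IsOpen w) (hs : IsPreconnected s)
    (hcov : s ⊆ u ∪ w) (hdisj : s ∩ (u ∩ w) = ∅) (hne : (s ∩ u).Nonempty) : s ⊆ u := by
  rcases (s ∩ w).eq_empty_or_nonempty with h | h
  · intro z hz
    rcases hcov hz with h1 | h1
    · exact h1
    · exfalso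
      have hzw : z ∈ s ∩ w := ⟨hz, h1⟩
      rw [h] at hzw
      exact hzw
  · have := hs u w hu hw hcov hne h
    rw [hdisj] at this
    exact absurd this (by simp)

private lemma moore_aux_insert_core {S : Set X} (hS : IsPreconnected S) {v : X} (hv : v ∈ S)
    {u w : Set X} (hu : IsOpen u) (hw : IsOpen w)
    (hcov : S \ {v} ⊆ u ∪ w) (hdisj : S \ {v} ∩ (u ∩ w) = ∅)
    {p q : Set X} (hp : IsOpen p) (hq : IsOpen q)
    (hTpq : insert v (S \ {v} ∩ u) ⊆ p ∪ q)
    (hTq : (insert v (S \ {v} ∩ u) ∩ q).Nonempty)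
    (hpq : insert v (S \ {v} ∩ u) ∩ (p ∩ q) = ∅) (hvp : v ∈ p) : False := by
  set T := insert v (S \ {v} ∩ u) with hT
  have hvq : v ∉ q := by
    intro hvq
    have : v ∈ T ∩ (p ∩ q) := ⟨mem_insert _ _, hvp, hvq⟩
    rw [hpq] at this; exact this
  set o₁ : Set X := u ∩ {v}ᶜ ∩ q with ho₁def
  set o₂ : Set X := (w ∩ {v}ᶜ) ∪ p with ho₂def
  have ho₁ : IsOpen o₁ := ((hu.inter isOpen_compl_singleton).inter hq)
  have ho₂ : IsOpen o₂ := (hw.inter isOpen_compl_singleton).union hp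
  have hScov : S ⊆ o₁ ∪ o₂ := by
    intro z hz
    by_cases hzv : z = v
    · exact Or.inr (Or.inr (hzv ▸ hvp))
    · have hz' : z ∈ S \ {v} := ⟨hz, hzv⟩
      rcases hcov hz' with hzu | hzw
      · have hzT : z ∈ T := mem_insert_of_mem _ ⟨hz', hzu⟩
        rcases hTpq hzT with hzp | hzq
        · exact Or.inr (Or.inr hzp)
        · exact Or.inl ⟨⟨hzu, hzv⟩, hzq⟩
      · exact Or.inr (Or.inl ⟨hzw, hzv⟩)
  have hne₁ : (S ∩ o₁).Nonempty := by
    obtain ⟨y, hyT, hyq⟩ := hTq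
    have hyv : y ≠ v := fun h => hvq (h ▸ hyq)
    rcases mem_insert_iff.mp hyT with h | h
    · exact absurd h hyv
    · exact ⟨y, h.1.1, ⟨h.2, hyv⟩, hyq⟩
  have hne₂ : (S ∩ o₂).Nonempty := ⟨v, hv, Or.inr hvp⟩
  have hSempty : S ∩ (o₁ ∩ o₂) = ∅ := by
    ext z; simp only [mem_inter_iff, mem_empty_iff_false, iff_false]
    rintro ⟨hzS, ⟨⟨hzu, hzv⟩, hzq⟩, hzo₂⟩
    rcases hzo₂ with ⟨hzw, -⟩ | hzp
    · have : z ∈ S \ {v} ∩ (u ∩ w) := ⟨⟨hzS, hzv⟩, hzu, hzw⟩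
      rw [hdisj] at this; exact this
    · have : z ∈ T ∩ (p ∩ q) := ⟨mem_insert_of_mem _ ⟨⟨hzS, hzv⟩, hzu⟩, hzp, hzq⟩
      rw [hpq] at this; exact this
  have := hS o₁ o₂ ho₁ ho₂ hScov hne₁ hne₂
  rw [hSempty] at this
  exact absurd this (by simp)

/-- If `S` is preconnected, `v ∈ S`, and `u, w` relatively separate `S \ {v}`, then
the piece `S \ {v} ∩ u` together with `v` is preconnected. -/
lemma moore_aux_insert {S : Set X} (hS : IsPreconnected S) {v : X} (hv : v ∈ S)
    {u w : Set X} (hu : IsOpen u) (hw : IsOpen w)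
    (hcov : S \ {v} ⊆ u ∪ w) (hdisj : S \ {v} ∩ (u ∩ w) = ∅) :
    IsPreconnected (insert v (S \ {v} ∩ u)) := by
  intro p q hp hq hTpq hTp hTq
  by_contra hcon
  have hpq : insert v (S \ {v} ∩ u) ∩ (p ∩ q) = ∅ := not_nonempty_iff_eq_empty.mp hcon
  rcases hTpq (mem_insert v _) with hvp | hvq
  · exact moore_aux_insert_core hS hv hu hw hcov hdisj hp hq hTpq hTq hpq hvp
  · refine moore_aux_insert_core hS hv hu hw hcov hdisj hq hp ?_ hTp ?_ hvq
    · rwa [union_comm]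
    · rwa [inter_comm q p]

end MooreHelpers

set_option linter.unusedSectionVars false

section MooreHelpers2

open Set

variable {X : Type*} [TopologicalSpace X] [T2Space X] [CompactSpace X]

/-- In a compact Hausdorff space, a nondegenerate subcontinuum `K` has, for any `x ∈ K`,
a point `v ≠ x` that does not cut `K`. -/
lemma moore_exists_noncut {K : Set X} (hKcl : IsClosed K) (hKc : IsPreconnected K)
    {x : X} (hx : x ∈ K) (hne : (K \ {x}).Nonempty) :
    ∃ v ∈ K, v ≠ x ∧ IsPreconnected (K \ {v}) := by
  classical
  by_contra hcon
  push_neg at hcon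
  have hch : ∀ v : X, ∃ u w : Set X, v ∈ K → v ≠ x →
      IsOpen u ∧ IsOpen w ∧ K \ {v} ⊆ u ∪ w ∧ K \ {v} ∩ (u ∩ w) = ∅ ∧
        x ∈ K \ {v} ∩ u ∧ (K \ {v} ∩ w).Nonempty := by
    intro v
    by_cases hv : v ∈ K ∧ v ≠ x
    · have h1 : ¬ IsPreconnected (K \ {v}) := hcon v hv.1 hv.2
      rw [IsPreconnected] at h1
      push_neg at h1
      obtain ⟨u, w, hu, hw, hcov, hne1, hne2, hempty⟩ := h1
      have hempty' : K \ {v} ∩ (u ∩ w) = ∅ := hempty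
      have hxv : x ∈ K \ {v} := ⟨hx, fun h => hv.2 (by simpa using h.symm)⟩
      rcases hcov hxv with hxu | hxw
      · exact ⟨u, w, fun _ _ => ⟨hu, hw, hcov, hempty', ⟨hxv, hxu⟩, hne2⟩⟩
      · refine ⟨w, u, fun _ _ => ⟨hw, hu, ?_, ?_, ⟨hxv, hxw⟩, hne1⟩⟩
        · rwa [union_comm]
        · rwa [inter_comm w u]
    · exact ⟨∅, ∅, fun h1 h2 => absurd ⟨h1, h2⟩ hv⟩
  choose U W hprop using hch
  set A : X → Set X := fun v => K \ {v} ∩ U v with hA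
  set B : X → Set X := fun v => K \ {v} ∩ W v with hB
  -- basic facts for good v
  have hBclosed : ∀ v, v ∈ K → v ≠ x → IsClosed (insert v (B v)) := by
    intro v hv hvx
    obtain ⟨hu, hw, hcov, hdisj, hxu, hBne⟩ := hprop v hv hvx
    have heq : insert v (B v) = K ∩ (U v ∩ {v}ᶜ)ᶜ := by
      ext z
      simp only [hB, mem_insert_iff, mem_inter_iff, mem_diff, mem_compl_iff,
        mem_singleton_iff, not_and, not_not]
      constructor
      · rintro (rfl | ⟨⟨hzK, hzv⟩, hzw⟩)
        · exact ⟨hv, fun _ => rfl⟩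
        · refine ⟨hzK, fun hzu => ?_⟩
          exfalso
          have hzin : z ∈ K \ {v} ∩ (U v ∩ W v) := ⟨⟨hzK, hzv⟩, hzu, hzw⟩
          rw [hdisj] at hzin; exact hzin
      · rintro ⟨hzK, himp⟩
        by_cases hzv : z = v
        · exact Or.inl hzv
        · refine Or.inr ⟨⟨hzK, hzv⟩, ?_⟩
          rcases hcov ⟨hzK, hzv⟩ with hzu | hzw
          · exact absurd (himp hzu) hzv
          · exact hzw
    rw [heq]
    exact hKcl.inter (hu.inter isOpen_compl_singleton).isClosed_compl
  have hxnotin : ∀ v, v ∈ K → v ≠ x → x ∉ insert v (B v) := by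
    intro v hv hvx hmem
    obtain ⟨hu, hw, hcov, hdisj, hxu, hBne⟩ := hprop v hv hvx
    rcases mem_insert_iff.mp hmem with h | h
    · exact hvx h.symm
    · have : x ∈ K \ {v} ∩ (U v ∩ W v) := ⟨h.1, hxu.2, h.2⟩
      rw [hdisj] at this; exact this
  have hBconn : ∀ v, v ∈ K → v ≠ x → IsPreconnected (insert v (B v)) := by
    intro v hv hvx
    obtain ⟨hu, hw, hcov, hdisj, hxu, hBne⟩ := hprop v hv hvx
    exact moore_aux_insert hKc hv hw hu (by rwa [union_comm]) (by rwa [inter_comm (W v) (U v)])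
  have hAconn : ∀ v, v ∈ K → v ≠ x → IsPreconnected (insert v (A v)) := by
    intro v hv hvx
    obtain ⟨hu, hw, hcov, hdisj, hxu, hBne⟩ := hprop v hv hvx
    exact moore_aux_insert hKc hv hu hw hcov hdisj
  -- key monotonicity
  have hkey : ∀ v, v ∈ K → v ≠ x → ∀ y, y ∈ B v →
      (y ∈ K ∧ y ≠ x) ∧ insert y (B y) ⊆ B v := by
    intro v hv hvx y hy
    obtain ⟨hu, hw, hcov, hdisj, hxu, hBne⟩ := hprop v hv hvx
    have hyK : y ∈ K := hy.1.1
    have hyv : y ≠ v := hy.1.2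
    have hyx : y ≠ x := by
      intro h
      have hxin : x ∈ K \ {v} ∩ (U v ∩ W v) := ⟨h ▸ hy.1, hxu.2, h ▸ hy.2⟩
      rw [hdisj] at hxin; exact hxin
    obtain ⟨hu', hw', hcov', hdisj', hxu', hBne'⟩ := hprop y hyK hyx
    -- insert v (A v) ⊆ A y
    have hsub : insert v (A v) ⊆ K \ {y} := by
      rintro z (rfl | hz)
      · exact ⟨hv, fun h => hyv (by simpa using h.symm)⟩
      · refine ⟨hz.1.1, fun h => ?_⟩
        simp only [mem_singleton_iff] at h
        subst h
        have : z ∈ K \ {v} ∩ (U v ∩ W v) := ⟨hz.1, hz.2, hy.2⟩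
        rw [hdisj] at this; exact this
    have hsubU : insert v (A v) ⊆ U y := by
      apply moore_aux_side hu' hw' (hAconn v hv hvx) (fun z hz => hcov' (hsub hz))
      · apply eq_empty_of_subset_empty
        intro z hz
        have : z ∈ K \ {y} ∩ (U y ∩ W y) := ⟨hsub hz.1, hz.2⟩
        rw [hdisj'] at this; exact this
      · exact ⟨x, mem_insert_of_mem _ hxu, hxu'.2⟩
    have hAsub : insert v (A v) ⊆ A y := fun z hz => ⟨hsub hz, hsubU hz⟩
    refine ⟨⟨hyK, hyx⟩, ?_⟩
    rintro z (rfl | hz)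
    · exact hy
    · -- z ∈ B y ⊆ B v
      have hzK : z ∈ K := hz.1.1
      have hzy : z ≠ y := hz.1.2
      have hznotA : z ∉ insert v (A v) := by
        intro hmem
        have : z ∈ K \ {y} ∩ (U y ∩ W y) := ⟨hz.1, (hAsub hmem).2, hz.2⟩
        rw [hdisj'] at this; exact this
      have hzv : z ≠ v := fun h => hznotA (h ▸ mem_insert _ _)
      rcases hcov (show z ∈ K \ {v} from ⟨hzK, hzv⟩) with hzu | hzw
      · exact absurd (mem_insert_of_mem v (show z ∈ A v from ⟨⟨hzK, hzv⟩, hzu⟩)) hznotA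
      · exact ⟨⟨hzK, hzv⟩, hzw⟩
  -- the family for Zorn
  set 𝒮 : Set (Set X) := {s | ∃ v, (v ∈ K ∧ v ≠ x) ∧ s = insert v (B v)} with h𝒮
  have hS_sub : ∀ s ∈ 𝒮, s ⊆ K := by
    rintro s ⟨v, ⟨hv, hvx⟩, rfl⟩
    rintro z (rfl | hz)
    · exact hv
    · exact hz.1.1
  have hS_x : ∀ s ∈ 𝒮, x ∉ s := by
    rintro s ⟨v, ⟨hv, hvx⟩, rfl⟩
    exact hxnotin v hv hvx
  obtain ⟨v₀, hv₀x⟩ := hne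
  have hv₀K : v₀ ∈ K := hv₀x.1
  have hv₀x' : v₀ ≠ x := by simpa using hv₀x.2
  have hmem₀ : insert v₀ (B v₀) ∈ 𝒮 := ⟨v₀, ⟨hv₀K, hv₀x'⟩, rfl⟩
  have Hzorn : ∀ c ⊆ 𝒮, IsChain (· ⊆ ·) c → c.Nonempty → ∃ lb ∈ 𝒮, ∀ s ∈ c, lb ⊆ s := by
    intro c hc hchain hcne
    haveI : Nonempty ↥c := hcne.to_subtype
    have hCne : (⋂ s : ↥c, (s : Set X)).Nonempty := by
      apply IsCompact.nonempty_iInter_of_directed_nonempty_isCompact_isClosed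
      · intro i j
        rcases hchain.total i.2 j.2 with h | h
        · exact ⟨i, le_refl _, h⟩
        · exact ⟨j, h, le_refl _⟩
      · rintro ⟨s, hs⟩
        obtain ⟨v, ⟨hv, hvx⟩, rfl⟩ := hc hs
        exact ⟨v, mem_insert _ _⟩
      · rintro ⟨s, hs⟩
        obtain ⟨v, ⟨hv, hvx⟩, rfl⟩ := hc hs
        exact (hBclosed v hv hvx).isCompact
      · rintro ⟨s, hs⟩
        obtain ⟨v, ⟨hv, hvx⟩, rfl⟩ := hc hs
        exact hBclosed v hv hvx
    obtain ⟨y, hy⟩ := hCne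
    simp only [mem_iInter] at hy
    obtain ⟨s₁, hs₁⟩ := hcne
    have hyK : y ∈ K := hS_sub s₁ (hc hs₁) (hy ⟨s₁, hs₁⟩)
    have hyx : y ≠ x := fun h => hS_x s₁ (hc hs₁) (h ▸ hy ⟨s₁, hs₁⟩)
    refine ⟨insert y (B y), ⟨y, ⟨hyK, hyx⟩, rfl⟩, ?_⟩
    intro s hs
    obtain ⟨v, ⟨hv, hvx⟩, rfl⟩ := hc hs
    rcases mem_insert_iff.mp (hy ⟨_, hs⟩) with h | h
    · subst h; exact le_refl _
    · exact (hkey v hv hvx y h).2.trans (subset_insert _ _)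
  obtain ⟨m, hm_sub, hm_min⟩ := zorn_superset_nonempty 𝒮 Hzorn _ hmem₀
  obtain ⟨v, ⟨hv, hvx⟩, rfl⟩ := hm_min.1
  obtain ⟨hu, hw, hcov, hdisj, hxu, hBne⟩ := hprop v hv hvx
  obtain ⟨y, hy⟩ := hBne
  have hkey' := hkey v hv hvx y hy
  have hmem' : insert y (B y) ∈ 𝒮 := ⟨y, hkey'.1, rfl⟩
  have hsub' : insert y (B y) ⊆ insert v (B v) := hkey'.2.trans (subset_insert _ _)
  have heq := hm_min.2 hmem' hsub'
  -- v ∈ insert v (B v) = insert y (B y) ⊆ ... but v ∉ B y and v ≠ y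
  have hvy : v ≠ y := fun h => hy.1.2 h.symm
  have : v ∈ insert y (B y) := heq (mem_insert _ _)
  rcases mem_insert_iff.mp this with h | h
  · exact hvy h
  · exact (hkey'.2 (mem_insert_of_mem _ h)).1.2 rfl

/-- A nonempty compact set has a maximal element for a total transitive relation with
closed upper sections. -/
lemma moore_exists_rel_top (r : X → X → Prop) (htrans : Transitive r)
    (htot : ∀ p q : X, r p q ∨ r q p) (hclosed : ∀ k, IsClosed {z | r k z})
    {K : Set X} (hK : IsCompact K) (hKne : K.Nonempty) : ∃ m ∈ K, ∀ k ∈ K, r k m := by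
  haveI : Nonempty ↥K := hKne.to_subtype
  have h := IsCompact.nonempty_iInter_of_directed_nonempty_isCompact_isClosed
      (fun k : ↥K => K ∩ {z | r k z}) ?_ ?_ ?_ ?_
  · obtain ⟨m, hm⟩ := h
    simp only [mem_iInter, mem_inter_iff] at hm
    exact ⟨m, (hm ⟨_, hKne.some_mem⟩).1, fun k hk => (hm ⟨k, hk⟩).2⟩
  · intro i j
    rcases htot i j with h' | h'
    · exact ⟨j, fun z hz => ⟨hz.1, htrans h' hz.2⟩, le_refl _⟩
    · exact ⟨i, le_refl _, fun z hz => ⟨hz.1, htrans h' hz.2⟩⟩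
  · intro k
    exact ⟨k, k.2, (htot k k).elim id id⟩
  · intro k
    exact hK.inter_right (hclosed k)
  · intro k
    exact hK.isClosed.inter (hclosed k)

end MooreHelpers2

/-- Moore's characterization: a metric continuum with at least two points `a ≠ b` in
which every point other than `a, b` is a cut point is an arc with endpoints `a, b`. -/
theorem stmt10 (J : Type*) [MetricSpace J] [CompactSpace J] [ConnectedSpace J]
    (a b : J) (hab : a ≠ b)
    (hcut : ∀ x : J, x ≠ a → x ≠ b → ¬ IsPreconnected ({x}ᶜ : Set J)) :
    ∃ f : ℝ → J, ContinuousOn f (Icc 0 1) ∧ InjOn f (Icc 0 1) ∧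
      f '' Icc 0 1 = univ ∧ f 0 = a ∧ f 1 = b := by
  classical
  -- Step 1: choose separations of J \ {x} for every cut point x.
  have hsep : ∀ x : J, ∃ U V : Set J, x = a ∨ x = b ∨
      (IsOpen U ∧ IsOpen V ∧ U ∪ V = ({x}ᶜ : Set J) ∧ U ∩ V = ∅ ∧ a ∈ U ∧ (V).Nonempty) := by
    intro x
    by_cases hxa : x = a
    · exact ⟨∅, ∅, Or.inl hxa⟩
    by_cases hxb : x = b
    · exact ⟨∅, ∅, Or.inr (Or.inl hxb)⟩
    have h1 := hcut x hxa hxb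
    rw [IsPreconnected] at h1
    push_neg at h1
    obtain ⟨u, v, hu, hv, hcov, hne1, hne2, hempty⟩ := h1
    have hUop : IsOpen (({x}ᶜ : Set J) ∩ u) := isOpen_compl_singleton.inter hu
    have hVop : IsOpen (({x}ᶜ : Set J) ∩ v) := isOpen_compl_singleton.inter hv
    have hunion : (({x}ᶜ : Set J) ∩ u) ∪ (({x}ᶜ : Set J) ∩ v) = ({x}ᶜ : Set J) := by
      rw [← inter_union_distrib_left]
      exact inter_eq_self_of_subset_left hcov
    have hdisj0 : (({x}ᶜ : Set J) ∩ u) ∩ (({x}ᶜ : Set J) ∩ v) = ∅ := by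
      apply eq_empty_of_subset_empty
      intro z hz
      rw [← hempty]
      exact ⟨hz.1.1, hz.1.2, hz.2.2⟩
    have hax : a ∈ ({x}ᶜ : Set J) := fun h => hxa (mem_singleton_iff.mp h).symm
    have haUV : a ∈ (({x}ᶜ : Set J) ∩ u) ∪ (({x}ᶜ : Set J) ∩ v) := by
      rw [hunion]; exact hax
    rcases haUV with haa | haa
    · exact ⟨_, _, Or.inr (Or.inr ⟨hUop, hVop, hunion, hdisj0, haa, hne2⟩)⟩
    · refine ⟨_, _, Or.inr (Or.inr ⟨hVop, hUop, ?_, ?_, haa, hne1⟩)⟩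
      · rwa [union_comm]
      · rwa [inter_comm]
  choose U V hUV using hsep
  have hprop : ∀ x : J, x ≠ a → x ≠ b →
      IsOpen (U x) ∧ IsOpen (V x) ∧ U x ∪ V x = ({x}ᶜ : Set J) ∧ U x ∩ V x = ∅ ∧
        a ∈ U x ∧ (V x).Nonempty := by
    intro x hxa hxb
    rcases hUV x with h | h | h
    · exact absurd h hxa
    · exact absurd h hxb
    · exact h
  have hUo : ∀ x, x ≠ a → x ≠ b → IsOpen (U x) := fun x h1 h2 => (hprop x h1 h2).1
  have hVo : ∀ x, x ≠ a → x ≠ b → IsOpen (V x) := fun x h1 h2 => (hprop x h1 h2).2.1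
  have hcov' : ∀ x, (h1 : x ≠ a) → (h2 : x ≠ b) → U x ∪ V x = ({x}ᶜ : Set J) :=
    fun x h1 h2 => (hprop x h1 h2).2.2.1
  have hdisj : ∀ x, (h1 : x ≠ a) → (h2 : x ≠ b) → U x ∩ V x = ∅ :=
    fun x h1 h2 => (hprop x h1 h2).2.2.2.1
  have haU : ∀ x, (h1 : x ≠ a) → (h2 : x ≠ b) → a ∈ U x := fun x h1 h2 => (hprop x h1 h2).2.2.2.2.1
  have hVne : ∀ x, (h1 : x ≠ a) → (h2 : x ≠ b) → (V x).Nonempty :=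
    fun x h1 h2 => (hprop x h1 h2).2.2.2.2.2
  have hUsub : ∀ x, (h1 : x ≠ a) → (h2 : x ≠ b) → U x ⊆ ({x}ᶜ : Set J) :=
    fun x h1 h2 => (hcov' x h1 h2) ▸ subset_union_left
  have hVsub : ∀ x, (h1 : x ≠ a) → (h2 : x ≠ b) → V x ⊆ ({x}ᶜ : Set J) :=
    fun x h1 h2 => (hcov' x h1 h2) ▸ subset_union_right
  have hxU : ∀ x, (h1 : x ≠ a) → (h2 : x ≠ b) → x ∉ U x :=
    fun x h1 h2 hmem => (hUsub x h1 h2 hmem) rfl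
  have hxV : ∀ x, (h1 : x ≠ a) → (h2 : x ≠ b) → x ∉ V x :=
    fun x h1 h2 hmem => (hVsub x h1 h2 hmem) rfl
  -- connectedness of the two sides with the cut point added
  have hUconn : ∀ x, (h1 : x ≠ a) → (h2 : x ≠ b) → IsPreconnected (insert x (U x)) := by
    intro x h1 h2
    have hrw : univ \ {x} ∩ U x = U x := by
      rw [← Set.compl_eq_univ_diff]
      exact inter_eq_self_of_subset_right (hUsub x h1 h2)
    have h := moore_aux_insert (S := (univ : Set J)) isPreconnected_univ (mem_univ x)
        (hUo x h1 h2) (hVo x h1 h2) ?_ ?_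
    · rwa [hrw] at h
    · rw [← Set.compl_eq_univ_diff, ← hcov' x h1 h2]
    · rw [← Set.compl_eq_univ_diff, ← hcov' x h1 h2, hdisj x h1 h2, inter_empty]
  have hVconn : ∀ x, (h1 : x ≠ a) → (h2 : x ≠ b) → IsPreconnected (insert x (V x)) := by
    intro x h1 h2
    have hrw : univ \ {x} ∩ V x = V x := by
      rw [← Set.compl_eq_univ_diff]
      exact inter_eq_self_of_subset_right (hVsub x h1 h2)
    have h := moore_aux_insert (S := (univ : Set J)) isPreconnected_univ (mem_univ x)
        (hVo x h1 h2) (hUo x h1 h2) ?_ ?_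
    · rwa [hrw] at h
    · rw [← Set.compl_eq_univ_diff, ← hcov' x h1 h2, union_comm]
    · rw [← Set.compl_eq_univ_diff, ← hcov' x h1 h2, inter_comm (V x) (U x), hdisj x h1 h2, inter_empty]
  have hins_eqV : ∀ x, (h1 : x ≠ a) → (h2 : x ≠ b) → insert x (V x) = (U x)ᶜ := by
    intro x h1 h2
    ext z
    simp only [mem_insert_iff, mem_compl_iff]
    constructor
    · rintro (h | hz)
      · exact fun hm => hxU x h1 h2 (h ▸ hm)
      · intro hzU
        have hzz : z ∈ U x ∩ V x := ⟨hzU, hz⟩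
        rw [hdisj x h1 h2] at hzz; exact hzz
    · intro hz
      by_cases hzx : z = x
      · exact Or.inl hzx
      · have hzz : z ∈ U x ∪ V x := by
          rw [hcov' x h1 h2]; exact hzx
        rcases hzz with h | h
        · exact absurd h hz
        · exact Or.inr h
  -- Step 2 : b lies in V x for every cut point x
  have hbV : ∀ x, (h1 : x ≠ a) → (h2 : x ≠ b) → b ∈ V x := by
    intro x h1 h2
    by_contra hbVx
    have hbc : b ∈ ({x}ᶜ : Set J) := fun h => h2 (mem_singleton_iff.mp h).symm
    have hbU : b ∈ U x := by
      rw [← hcov' x h1 h2] at hbc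
      rcases hbc with h | h
      · exact h
      · exact absurd h hbVx
    have hKclosed : IsClosed (insert x (V x)) :=
      hins_eqV x h1 h2 ▸ (hUo x h1 h2).isClosed_compl
    have hKconn : IsPreconnected (insert x (V x)) := hVconn x h1 h2
    have hKx : x ∈ insert x (V x) := mem_insert _ _
    have hKdiff : insert x (V x) \ {x} = V x := by
      ext z
      simp only [mem_diff, mem_insert_iff, mem_singleton_iff]
      constructor
      · rintro ⟨h | hz, hzx⟩
        · exact absurd h hzx
        · exact hz
      · intro hz
        exact ⟨Or.inr hz, fun h => hxV x h1 h2 (h ▸ hz)⟩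
    obtain ⟨v, hvK, hvx, hvconn⟩ := moore_exists_noncut hKclosed hKconn hKx
      (by rw [hKdiff]; exact hVne x h1 h2)
    have hvV : v ∈ V x := by
      rw [← hKdiff]; exact ⟨hvK, fun h => hvx (mem_singleton_iff.mp h)⟩
    have hva : v ≠ a := by
      intro h
      have : a ∈ U x ∩ V x := ⟨haU x h1 h2, h ▸ hvV⟩
      rw [hdisj x h1 h2] at this; exact this
    have hvb : v ≠ b := by
      intro h
      exact hbVx (h ▸ hvV)
    apply hcut v hva hvb
    have hrw : ({v}ᶜ : Set J) = insert x (U x) ∪ (insert x (V x) \ {v}) := by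
      ext z
      simp only [mem_compl_iff, mem_singleton_iff, mem_union, mem_insert_iff, mem_diff]
      constructor
      · intro hzv
        by_cases hzx : z = x
        · exact Or.inl (Or.inl hzx)
        · have hzz : z ∈ U x ∪ V x := by
            rw [hcov' x h1 h2]; exact hzx
          rcases hzz with h | h
          · exact Or.inl (Or.inr h)
          · exact Or.inr ⟨Or.inr h, hzv⟩
      · rintro (hz | hz)
        · rcases hz with rfl | hz
          · exact fun h => hvx h.symm
          · intro h
            have : v ∈ U x ∩ V x := ⟨h ▸ hz, hvV⟩
            rw [hdisj x h1 h2] at this; exact this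
        · exact hz.2
    rw [hrw]
    exact IsPreconnected.union x (mem_insert _ _)
      ⟨hKx, fun h => hvx (mem_singleton_iff.mp h).symm⟩ (hUconn x h1 h2) hvconn
  -- Step 3: order lemmas
  have hL1 : ∀ x y, x ≠ a → x ≠ b → y ≠ a → y ≠ b → y ∈ V x → x ∈ U y := by
    intro x y hxa hxb hya hyb hyV
    have hyx : y ≠ x := fun h => hxV x hxa hxb (h ▸ hyV)
    have hsub : insert x (U x) ⊆ ({y}ᶜ : Set J) := by
      rintro z (rfl | hz)
      · exact fun h => hyx (mem_singleton_iff.mp h).symm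
      · intro h
        have : y ∈ U x ∩ V x := ⟨(mem_singleton_iff.mp h) ▸ hz, hyV⟩
        rw [hdisj x hxa hxb] at this; exact this
    have hres : insert x (U x) ⊆ U y := by
      apply moore_aux_side (hUo y hya hyb) (hVo y hya hyb) (hUconn x hxa hxb)
      · intro z hz
        rw [hcov' y hya hyb]
        exact hsub hz
      · rw [hdisj y hya hyb, inter_empty]
      · exact ⟨a, mem_insert_of_mem _ (haU x hxa hxb), haU y hya hyb⟩
    exact hres (mem_insert _ _)
  have hL2 : ∀ x y, x ≠ a → x ≠ b → y ≠ a → y ≠ b → y ∈ U x → x ∈ V y := by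
    intro x y hxa hxb hya hyb hyU
    have hyx : y ≠ x := fun h => hxU x hxa hxb (h ▸ hyU)
    have hsub : insert x (V x) ⊆ ({y}ᶜ : Set J) := by
      rintro z (rfl | hz)
      · exact fun h => hyx (mem_singleton_iff.mp h).symm
      · intro h
        have : y ∈ U x ∩ V x := ⟨hyU, (mem_singleton_iff.mp h) ▸ hz⟩
        rw [hdisj x hxa hxb] at this; exact this
    have hres : insert x (V x) ⊆ V y := by
      apply moore_aux_side (hVo y hya hyb) (hUo y hya hyb) (hVconn x hxa hxb)
      · intro z hz
        rw [union_comm, hcov' y hya hyb]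
        exact hsub hz
      · rw [inter_comm (V y) (U y), hdisj y hya hyb, inter_empty]
      · exact ⟨b, mem_insert_of_mem _ (hbV x hxa hxb), hbV y hya hyb⟩
    exact hres (mem_insert _ _)
  have hL3 : ∀ x y z, x ≠ a → x ≠ b → y ≠ a → y ≠ b → z ≠ a → z ≠ b →
      y ∈ V x → z ∈ V y → z ∈ V x := by
    intro x y z hxa hxb hya hyb hza hzb hyV hzV
    have hxUy : x ∈ U y := hL1 x y hxa hxb hya hyb hyV
    have hxy : x ≠ y := fun h => hxV x hxa hxb (h ▸ hyV)
    have hsub : insert y (V y) ⊆ ({x}ᶜ : Set J) := by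
      rintro w (rfl | hw)
      · exact fun h => hxy (mem_singleton_iff.mp h).symm
      · intro h
        have : x ∈ U y ∩ V y := ⟨hxUy, (mem_singleton_iff.mp h) ▸ hw⟩
        rw [hdisj y hya hyb] at this; exact this
    have hres : insert y (V y) ⊆ V x := by
      apply moore_aux_side (hVo x hxa hxb) (hUo x hxa hxb) (hVconn y hya hyb)
      · intro w hw
        rw [union_comm, hcov' x hxa hxb]
        exact hsub hw
      · rw [inter_comm (V x) (U x), hdisj x hxa hxb, inter_empty]
      · exact ⟨b, mem_insert_of_mem _ (hbV y hya hyb), hbV x hxa hxb⟩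
    exact hres (mem_insert_of_mem _ hzV)
  -- Step 4: the linear order
  set ltr : J → J → Prop := fun x y =>
    x ≠ y ∧ (x = a ∨ y = b ∨ (x ≠ a ∧ x ≠ b ∧ y ≠ a ∧ y ≠ b ∧ y ∈ V x)) with hltr
  have hasymm : ∀ x y : J, ltr x y → ltr y x → False := by
    rintro x y ⟨hne1, h1⟩ ⟨hne2, h2⟩
    rcases h1 with h1 | h1 | h1
    · rcases h2 with h2 | h2 | h2
      · exact hne1 (h1.trans h2.symm)
      · exact hab (h1.symm.trans h2)
      · exact h2.2.2.1 h1
    · rcases h2 with h2 | h2 | h2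
      · exact hab (h2.symm.trans h1)
      · exact hne1 (h2.trans h1.symm)
      · exact h2.2.1 h1
    · rcases h2 with h2 | h2 | h2
      · exact h1.2.2.1 h2
      · exact h1.2.1 h2
      · have hin : x ∈ U y ∩ V y :=
          ⟨hL1 x y h1.1 h1.2.1 h1.2.2.1 h1.2.2.2.1 h1.2.2.2.2, h2.2.2.2.2⟩
        rw [hdisj y h1.2.2.1 h1.2.2.2.1] at hin
        exact hin
  have htrans' : ∀ x y z : J, ltr x y → ltr y z → ltr x z := by
    intro x y z hxy hyz
    have hxz : x ≠ z := by
      intro h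
      exact hasymm x y hxy (h ▸ hyz)
    refine ⟨hxz, ?_⟩
    rcases hxy.2 with h1 | h1 | h1
    · exact Or.inl h1
    · exfalso
      rcases hyz.2 with h2 | h2 | h2
      · exact hab (h2.symm.trans h1)
      · exact hyz.1 (h1.trans h2.symm)
      · exact h2.2.1 h1
    · rcases hyz.2 with h2 | h2 | h2
      · exact absurd h2 h1.2.2.1
      · exact Or.inr (Or.inl h2)
      · exact Or.inr (Or.inr ⟨h1.1, h1.2.1, h2.2.2.1, h2.2.2.2.1,
          hL3 x y z h1.1 h1.2.1 h1.2.2.1 h1.2.2.2.1 h2.2.2.1 h2.2.2.2.1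
            h1.2.2.2.2 h2.2.2.2.2⟩)
  haveI hirr : IsIrrefl J ltr := ⟨fun x h => h.1 rfl⟩
  haveI htrI : IsTrans J ltr := ⟨htrans'⟩
  haveI htri : IsTrichotomous J ltr := by
    suffices H : ∀ x y, ltr x y ∨ x = y ∨ ltr y x from
      ⟨fun x y h1 h2 => (H x y).elim (fun h => absurd h h1) (fun h => h.elim id (fun h => absurd h h2))⟩
    intro x y
    by_cases hxy : x = y
    · exact Or.inr (Or.inl hxy)
    by_cases hxa : x = a
    · exact Or.inl ⟨hxy, Or.inl hxa⟩
    by_cases hya : y = a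
    · exact Or.inr (Or.inr ⟨Ne.symm hxy, Or.inl hya⟩)
    by_cases hxb : x = b
    · exact Or.inr (Or.inr ⟨Ne.symm hxy, Or.inr (Or.inl hxb)⟩)
    by_cases hyb : y = b
    · exact Or.inl ⟨hxy, Or.inr (Or.inl hyb)⟩
    have hymem : y ∈ U x ∪ V x := by
      rw [hcov' x hxa hxb]
      exact fun h => hxy (mem_singleton_iff.mp h).symm
    rcases hymem with h | h
    · exact Or.inr (Or.inr ⟨Ne.symm hxy, Or.inr (Or.inr
        ⟨hya, hyb, hxa, hxb, hL2 x y hxa hxb hya hyb h⟩)⟩)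
    · exact Or.inl ⟨hxy, Or.inr (Or.inr ⟨hxa, hxb, hya, hyb, h⟩)⟩
  haveI hsto : IsStrictTotalOrder J ltr := { }
  letI lo : LinearOrder J := @linearOrderOfSTO J ltr hsto (fun _ _ => Classical.dec _)
  have hlt_iff : ∀ x y : J, x < y ↔ ltr x y := fun _ _ => Iff.rfl
  have hbot : ∀ z : J, a ≤ z := by
    intro z
    rcases eq_or_ne a z with h | h
    · exact le_of_eq h
    · exact le_of_lt ((hlt_iff a z).mpr ⟨h, Or.inl rfl⟩)
  have htop : ∀ z : J, z ≤ b := by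
    intro z
    rcases eq_or_ne z b with h | h
    · exact le_of_eq h
    · exact le_of_lt ((hlt_iff z b).mpr ⟨h, Or.inr (Or.inl rfl)⟩)
  have hab_lt : a < b := (hlt_iff a b).mpr ⟨hab, Or.inl rfl⟩
  -- intervals are open
  have hIio : ∀ y : J, IsOpen (Iio y) := by
    intro y
    by_cases hya : y = a
    · have he : Iio y = ∅ := by
        ext z
        simp only [mem_Iio, mem_empty_iff_false, iff_false]
        intro hz
        obtain ⟨hne, h⟩ := (hlt_iff z y).mp hz
        rcases h with h | h | h
        · exact hne (h.trans hya.symm)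
        · exact hab (hya.symm.trans h)
        · exact h.2.2.1 hya
      rw [he]; exact isOpen_empty
    by_cases hyb : y = b
    · have he : Iio y = ({y}ᶜ : Set J) := by
        ext z
        simp only [mem_Iio, mem_compl_iff, mem_singleton_iff]
        constructor
        · exact fun hz => ((hlt_iff z y).mp hz).1
        · exact fun hz => (hlt_iff z y).mpr ⟨hz, Or.inr (Or.inl hyb)⟩
      rw [he]; exact isOpen_compl_singleton
    · have he : Iio y = U y := by
        ext z
        constructor
        · intro hz
          obtain ⟨hne, h⟩ := (hlt_iff z y).mp hz
          rcases h with h | h | h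
          · exact h ▸ haU y hya hyb
          · exact absurd h hyb
          · exact hL1 z y h.1 h.2.1 hya hyb h.2.2.2.2
        · intro hzU
          have hzy : z ≠ y := fun h => hxU y hya hyb (h ▸ hzU)
          by_cases hza : z = a
          · exact (hlt_iff z y).mpr ⟨hzy, Or.inl hza⟩
          · have hzb : z ≠ b := by
              intro h
              have hbb : b ∈ U y ∩ V y := ⟨h ▸ hzU, hbV y hya hyb⟩
              rw [hdisj y hya hyb] at hbb; exact hbb
            exact (hlt_iff z y).mpr ⟨hzy, Or.inr (Or.inr
              ⟨hza, hzb, hya, hyb, hL2 y z hya hyb hza hzb hzU⟩)⟩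
      rw [he]; exact hUo y hya hyb
  have hIoi : ∀ x : J, IsOpen (Ioi x) := by
    intro x
    by_cases hxb : x = b
    · have he : Ioi x = ∅ := by
        ext z
        simp only [mem_Ioi, mem_empty_iff_false, iff_false]
        intro hz
        obtain ⟨hne, h⟩ := (hlt_iff x z).mp hz
        rcases h with h | h | h
        · exact hab (h.symm.trans hxb)
        · exact hne (hxb.trans h.symm)
        · exact h.2.1 hxb
      rw [he]; exact isOpen_empty
    by_cases hxa : x = a
    · have he : Ioi x = ({x}ᶜ : Set J) := by
        ext z
        simp only [mem_Ioi, mem_compl_iff, mem_singleton_iff]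
        constructor
        · exact fun hz => Ne.symm ((hlt_iff x z).mp hz).1
        · exact fun hz => (hlt_iff x z).mpr ⟨Ne.symm hz, Or.inl hxa⟩
      rw [he]; exact isOpen_compl_singleton
    · have he : Ioi x = V x := by
        ext z
        constructor
        · intro hz
          obtain ⟨hne, h⟩ := (hlt_iff x z).mp hz
          rcases h with h | h | h
          · exact absurd h hxa
          · exact h ▸ hbV x hxa hxb
          · exact h.2.2.2.2
        · intro hzV
          have hzx : x ≠ z := fun h => hxV x hxa hxb (h ▸ hzV)
          by_cases hzb : z = b
          · exact (hlt_iff x z).mpr ⟨hzx, Or.inr (Or.inl hzb)⟩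
          · have hza : z ≠ a := by
              intro h
              have haa : a ∈ U x ∩ V x := ⟨haU x hxa hxb, h ▸ hzV⟩
              rw [hdisj x hxa hxb] at haa; exact haa
            exact (hlt_iff x z).mpr ⟨hzx, Or.inr (Or.inr ⟨hxa, hxb, hza, hzb, hzV⟩)⟩
      rw [he]; exact hVo x hxa hxb
  have hIic_closed : ∀ x : J, IsClosed (Iic x) := by
    intro x
    have h := (hIoi x).isClosed_compl
    rwa [compl_Ioi] at h
  have hIci_closed : ∀ x : J, IsClosed (Ici x) := by
    intro x
    have h := (hIio x).isClosed_compl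
    rwa [compl_Iio] at h
  -- compact extrema
  have hmax : ∀ K : Set J, IsCompact K → K.Nonempty → ∃ m ∈ K, ∀ k ∈ K, k ≤ m :=
    fun K hK hne => moore_exists_rel_top (· ≤ ·) (fun _ _ _ h1 h2 => le_trans h1 h2)
      le_total (fun k => hIci_closed k) hK hne
  have hmin : ∀ K : Set J, IsCompact K → K.Nonempty → ∃ m ∈ K, ∀ k ∈ K, m ≤ k :=
    fun K hK hne => moore_exists_rel_top (fun p q => q ≤ p) (fun _ _ _ h1 h2 => le_trans h2 h1)
      (fun p q => le_total q p) (fun k => hIic_closed k) hK hne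
  -- least upper bounds
  have hlub_ex : ∀ S : Set J, ∃ m, IsLUB S m := by
    intro S
    have h1 : upperBounds S = ⋂ s ∈ S, Ici s := by
      ext z
      simp only [upperBounds, mem_setOf_eq, mem_iInter, mem_Ici]
    have h2 : IsClosed (upperBounds S) := by
      rw [h1]
      exact isClosed_biInter (fun s _ => hIci_closed s)
    obtain ⟨m, hm1, hm2⟩ := hmin _ h2.isCompact ⟨b, fun s _ => htop s⟩
    exact ⟨m, hm1, fun u hu => hm2 u hu⟩
  choose lub hlub using hlub_ex
  -- dense order
  have hdense : ∀ x y : J, x < y → ∃ z, x < z ∧ z < y := by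
    intro x y hxy
    by_contra hcon
    push_neg at hcon
    have hcover : Iic x ∪ Ici y = univ := by
      apply eq_univ_of_forall
      intro z
      rcases le_or_gt z x with h | h
      · exact Or.inl h
      · exact Or.inr (hcon z h)
    have hdisj2 : Iic x ∩ Ici y = ∅ := by
      apply eq_empty_of_subset_empty
      rintro z ⟨h1, h2⟩
      exact absurd hxy (not_lt.mpr (le_trans h2 h1))
    have hopen : IsOpen (Iic x) := by
      have he : Iic x = (Ici y)ᶜ := by
        ext z
        constructor
        · intro hz hz2
          have : z ∈ Iic x ∩ Ici y := ⟨hz, hz2⟩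
          rw [hdisj2] at this; exact this
        · intro hz
          rcases (eq_univ_iff_forall.mp hcover) z with h | h
          · exact h
          · exact absurd h hz
      rw [he]
      exact (hIci_closed y).isOpen_compl
    have hclopen : IsClopen (Iic x) := ⟨hIic_closed x, hopen⟩
    rcases isClopen_iff.mp hclopen with h | h
    · have : x ∈ Iic x := le_refl x
      rw [h] at this; exact this
    · have : y ∈ Iic x := by rw [h]; exact mem_univ y
      exact absurd hxy (not_lt.mpr this)
  -- Step 5: countable order-dense set
  obtain ⟨D, hDc, hDd⟩ := TopologicalSpace.exists_countable_dense J
  set E : Set J := D \ {a, b} with hE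
  have hEdense : ∀ x y : J, x < y → ∃ e, e ∈ E ∧ x < e ∧ e < y := by
    intro x y hxy
    obtain ⟨z1, hz1, hz1'⟩ := hdense x y hxy
    obtain ⟨z2, hz2, hz2'⟩ := hdense x z1 hz1
    obtain ⟨z3, hz3, hz3'⟩ := hdense x z2 hz2
    have hW : IsOpen ((Ioi x ∩ Iio y) \ ({a, b} : Set J)) :=
      ((hIoi x).inter (hIio y)).sdiff (Set.Finite.isClosed (toFinite {a, b}))
    have hWne : ((Ioi x ∩ Iio y) \ ({a, b} : Set J)).Nonempty := by
      by_cases h1 : z1 ∈ ({a, b} : Set J)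
      · by_cases h2 : z2 ∈ ({a, b} : Set J)
        · refine ⟨z3, ⟨hz3, lt_trans hz3' (lt_trans hz2' hz1')⟩, ?_⟩
          intro h3
          have h12 : z2 ≠ z1 := ne_of_lt hz2'
          have h31 : z3 ≠ z1 := ne_of_lt (lt_trans hz3' hz2')
          have h32 : z3 ≠ z2 := ne_of_lt hz3'
          simp only [mem_insert_iff, mem_singleton_iff] at h1 h2 h3
          rcases h1 with rfl | rfl <;> rcases h2 with rfl | rfl <;>
            rcases h3 with rfl | rfl <;> simp_all
        · exact ⟨z2, ⟨⟨hz2, lt_trans hz2' hz1'⟩, h2⟩⟩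
      · exact ⟨z1, ⟨⟨hz1, hz1'⟩, h1⟩⟩
    obtain ⟨e, heW, heD⟩ := hDd.inter_open_nonempty _ hW hWne
    exact ⟨e, ⟨heD, heW.2⟩, heW.1.1, heW.1.2⟩
  haveI hEco : Countable ↥E := (hDc.mono diff_subset).to_subtype
  haveI : DenselyOrdered ↥E := by
    constructor
    intro e1 e2 h
    obtain ⟨e, heE, h1, h2⟩ := hEdense e1 e2 h
    exact ⟨⟨e, heE⟩, h1, h2⟩
  haveI : NoMaxOrder ↥E := by
    constructor
    intro e
    have heb : (e : J) ≠ b := fun h => e.2.2 (Or.inr h)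
    obtain ⟨e', he'E, h1, _⟩ := hEdense e b (lt_of_le_of_ne (htop e) heb)
    exact ⟨⟨e', he'E⟩, h1⟩
  haveI : NoMinOrder ↥E := by
    constructor
    intro e
    have hea : (e : J) ≠ a := fun h => e.2.2 (Or.inl h)
    obtain ⟨e', he'E, _, h2⟩ := hEdense a e (lt_of_le_of_ne (hbot e) (Ne.symm hea))
    exact ⟨⟨e', he'E⟩, h2⟩
  haveI : Nonempty ↥E := by
    obtain ⟨e, heE, -, -⟩ := hEdense a b hab_lt
    exact ⟨⟨e, heE⟩⟩
  haveI : Set.OrdConnected (Set.Ioo (0 : ℚ) 1) := Set.ordConnected_Ioo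
  haveI : Nonempty ↥(Set.Ioo (0 : ℚ) 1) := ⟨⟨1/2, by norm_num, by norm_num⟩⟩
  obtain ⟨φ⟩ : Nonempty (↥(Set.Ioo (0 : ℚ) 1) ≃o ↥E) := Order.iso_of_countable_dense _ _
  set g : ↥(Set.Ioo (0 : ℚ) 1) → J := fun q => (φ q : J) with hg
  have hg_mono : ∀ q1 q2, q1 < q2 → g q1 < g q2 := by
    intro q1 q2 h
    exact Subtype.coe_lt_coe.mpr (φ.lt_iff_lt.mpr h)
  set f : ℝ → J := fun t => lub (insert a (g '' {q | ((q : ℚ) : ℝ) < t})) with hf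
  have hle_lub : ∀ (S : Set J) (s : J), s ∈ S → s ≤ lub S := fun S s h => (hlub S).1 h
  have hlub_le : ∀ (S : Set J) (u : J), (∀ s ∈ S, s ≤ u) → lub S ≤ u := fun S u h => (hlub S).2 h
  have hmono : Monotone f := by
    intro s t hst
    apply hlub_le
    rintro z (rfl | ⟨q, hq, rfl⟩)
    · exact hle_lub _ _ (mem_insert _ _)
    · exact hle_lub _ _ (mem_insert_of_mem _ ⟨q, lt_of_lt_of_le hq hst, rfl⟩)
  have hf_le0 : ∀ t : ℝ, t ≤ 0 → f t = a := by
    intro t ht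
    have hset : {q : ↥(Set.Ioo (0:ℚ) 1) | ((q : ℚ) : ℝ) < t} = ∅ := by
      ext q
      simp only [mem_setOf_eq, mem_empty_iff_false, iff_false, not_lt]
      have h0 : (0 : ℝ) < ((q : ℚ) : ℝ) := by exact_mod_cast q.2.1
      linarith
    have hrfl : f t = lub (insert a (g '' {q | ((q : ℚ) : ℝ) < t})) := rfl
    rw [hrfl, hset, image_empty]
    apply le_antisymm
    · apply hlub_le
      rintro z (h | hz)
      · exact le_of_eq h
      · exact absurd hz (notMem_empty z)
    · exact hle_lub _ _ (mem_insert _ _)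
  have hf_ge1 : ∀ t : ℝ, 1 ≤ t → f t = b := by
    intro t ht
    have hset : {q : ↥(Set.Ioo (0:ℚ) 1) | ((q : ℚ) : ℝ) < t} = univ := by
      apply eq_univ_of_forall
      intro q
      have h1 : ((q : ℚ) : ℝ) < 1 := by exact_mod_cast q.2.2
      exact lt_of_lt_of_le h1 ht
    have hrfl : f t = lub (insert a (g '' {q | ((q : ℚ) : ℝ) < t})) := rfl
    have hIs : IsLUB (insert a (g '' {q : ↥(Set.Ioo (0:ℚ) 1) | ((q : ℚ) : ℝ) < t})) b := by
      constructor
      · rintro z (rfl | ⟨q, -, rfl⟩)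
        · exact htop _
        · exact htop _
      · intro u hu
        by_contra hub
        have hub' : u < b := not_le.mp hub
        obtain ⟨e, heE, h1, h2⟩ := hEdense u b hub'
        have hmem : e ∈ insert a (g '' {q : ↥(Set.Ioo (0:ℚ) 1) | ((q : ℚ) : ℝ) < t}) := by
          refine mem_insert_of_mem _ ⟨φ.symm ⟨e, heE⟩, ?_, ?_⟩
          · rw [hset]; exact mem_univ _
          · show ((φ (φ.symm ⟨e, heE⟩)) : J) = e
            rw [OrderIso.apply_symm_apply]
        exact absurd h1 (not_lt.mpr (hu hmem))
    rw [hrfl]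
    exact (hlub _).unique hIs
  have hphi_le_f : ∀ (t : ℝ) (q : ↥(Set.Ioo (0:ℚ) 1)), ((q : ℚ) : ℝ) < t → g q ≤ f t :=
    fun t q hq => hle_lub _ _ (mem_insert_of_mem _ ⟨q, hq, rfl⟩)
  have hf_le_phi : ∀ (t : ℝ) (q : ↥(Set.Ioo (0:ℚ) 1)), t ≤ ((q : ℚ) : ℝ) → f t ≤ g q := by
    intro t q hq
    apply hlub_le
    rintro z (rfl | ⟨q', hq', rfl⟩)
    · exact hbot _
    · have hr : ((q' : ℚ) : ℝ) < ((q : ℚ) : ℝ) := lt_of_lt_of_le hq' hq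
      have hq2 : (q' : ℚ) < (q : ℚ) := by exact_mod_cast hr
      have hqq : q' < q := Subtype.coe_lt_coe.mp hq2
      exact le_of_lt (hg_mono _ _ hqq)
  -- strict monotonicity on [0,1]
  have hsmono : StrictMonoOn f (Icc (0:ℝ) 1) := by
    intro s hs t ht hst
    have h1 : s < min t 1 := lt_min hst (lt_of_lt_of_le hst ht.2)
    obtain ⟨q1, hq1s, hq1m⟩ := exists_rat_btwn h1
    obtain ⟨q2, hq21, hq2m⟩ := exists_rat_btwn hq1m
    have hq1pos : (0:ℚ) < q1 := by exact_mod_cast lt_of_le_of_lt hs.1 hq1s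
    have hq21' : q1 < q2 := by exact_mod_cast hq21
    have hq2pos : (0:ℚ) < q2 := hq1pos.trans hq21'
    have hq1lt1 : q1 < 1 := by exact_mod_cast lt_of_lt_of_le hq1m (min_le_right t 1)
    have hq2lt1 : q2 < 1 := by exact_mod_cast lt_of_lt_of_le hq2m (min_le_right t 1)
    calc f s ≤ g ⟨q1, hq1pos, hq1lt1⟩ := hf_le_phi s _ (le_of_lt hq1s)
      _ < g ⟨q2, hq2pos, hq2lt1⟩ := hg_mono _ _ (Subtype.mk_lt_mk.mpr hq21')
      _ ≤ f t := hphi_le_f t _ (lt_of_lt_of_le hq2m (min_le_left t 1))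
  -- f t is the sup of earlier values and inf of later values
  have hleft : ∀ (t : ℝ) (u : J), (∀ s, s < t → f s ≤ u) → f t ≤ u := by
    intro t u h
    apply hlub_le
    rintro z (hz | ⟨q, hq, rfl⟩)
    · exact hz.le.trans (hbot u)
    · have hq' : ((q : ℚ) : ℝ) < t := hq
      have h1 : ((q : ℚ) : ℝ) < (((q : ℚ) : ℝ) + t)/2 := by linarith
      have h2 : (((q : ℚ) : ℝ) + t)/2 < t := by linarith
      exact (hphi_le_f _ q h1).trans (h _ h2)
  have hright : ∀ (t : ℝ) (u : J), (∀ s, t < s → u ≤ f s) → u ≤ f t := by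
    intro t u h
    by_contra hcon
    have hcon' : f t < u := not_le.mp hcon
    obtain ⟨e1, he1E, h11, h12⟩ := hEdense (f t) u hcon'
    obtain ⟨e2, he2E, h21, h22⟩ := hEdense (f t) e1 h11
    have hgQ1 : g (φ.symm ⟨e1, he1E⟩) = e1 := by
      show ((φ (φ.symm ⟨e1, he1E⟩)) : J) = e1
      rw [OrderIso.apply_symm_apply]
    have hgQ2 : g (φ.symm ⟨e2, he2E⟩) = e2 := by
      show ((φ (φ.symm ⟨e2, he2E⟩)) : J) = e2
      rw [OrderIso.apply_symm_apply]
    have hQ21 : φ.symm ⟨e2, he2E⟩ < φ.symm ⟨e1, he1E⟩ := by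
      apply (OrderIso.lt_iff_lt φ.symm).mpr
      exact Subtype.mk_lt_mk.mpr h22
    have ht2 : t ≤ ((φ.symm ⟨e2, he2E⟩ : ℚ) : ℝ) := by
      by_contra hq
      push_neg at hq
      have := hphi_le_f t _ hq
      rw [hgQ2] at this
      exact absurd this (not_le.mpr h21)
    have hQr : ((φ.symm ⟨e2, he2E⟩ : ℚ) : ℝ) < ((φ.symm ⟨e1, he1E⟩ : ℚ) : ℝ) := by
      exact_mod_cast hQ21
    have htq1 : t < ((φ.symm ⟨e1, he1E⟩ : ℚ) : ℝ) := lt_of_le_of_lt ht2 hQr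
    have hts' : t < (t + ((φ.symm ⟨e1, he1E⟩ : ℚ) : ℝ))/2 := by linarith
    have hs'Q1 : (t + ((φ.symm ⟨e1, he1E⟩ : ℚ) : ℝ))/2 ≤ ((φ.symm ⟨e1, he1E⟩ : ℚ) : ℝ) := by
      linarith
    have h5 : u ≤ f ((t + ((φ.symm ⟨e1, he1E⟩ : ℚ) : ℝ))/2) := h _ hts'
    have h6 : f ((t + ((φ.symm ⟨e1, he1E⟩ : ℚ) : ℝ))/2) ≤ e1 := by
      have := hf_le_phi ((t + ((φ.symm ⟨e1, he1E⟩ : ℚ) : ℝ))/2) _ hs'Q1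
      rwa [hgQ1] at this
    exact absurd (h5.trans h6) (not_le.mpr h12)
  -- order neighborhoods inside open sets
  have hINT : ∀ (W : Set J) (x : J), IsOpen W → x ∈ W →
      ∃ m M : J, m ≤ x ∧ x ≤ M ∧ (m < x ∨ x = a) ∧ (x < M ∨ x = b) ∧
        ∀ z, m < z → z < M → z ∈ W := by
    intro W x hW hxW
    have hleft' : ∃ m : J, m ≤ x ∧ (m < x ∨ x = a) ∧ ∀ z, m < z → z ≤ x → z ∈ W := by
      by_cases h1 : (Wᶜ ∩ Iic x).Nonempty
      · obtain ⟨m, hm, hm'⟩ := hmax _ ((hW.isClosed_compl.inter (hIic_closed x)).isCompact) h1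
        refine ⟨m, hm.2, Or.inl (lt_of_le_of_ne hm.2 (fun h => hm.1 (h ▸ hxW))), ?_⟩
        intro z hz1 hz2
        by_contra hzW
        exact absurd hz1 (not_lt.mpr (hm' z ⟨hzW, hz2⟩))
      · refine ⟨a, hbot x, ?_, ?_⟩
        · rcases eq_or_ne x a with h | h
          · exact Or.inr h
          · exact Or.inl (lt_of_le_of_ne (hbot x) (Ne.symm h))
        · intro z hz1 hz2
          by_contra hzW
          exact h1 ⟨z, hzW, hz2⟩
    have hright' : ∃ M : J, x ≤ M ∧ (x < M ∨ x = b) ∧ ∀ z, x ≤ z → z < M → z ∈ W := by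
      by_cases h1 : (Wᶜ ∩ Ici x).Nonempty
      · obtain ⟨M, hM, hM'⟩ := hmin _ ((hW.isClosed_compl.inter (hIci_closed x)).isCompact) h1
        refine ⟨M, hM.2, Or.inl (lt_of_le_of_ne hM.2 (fun h => hM.1 (h.symm ▸ hxW))), ?_⟩
        intro z hz1 hz2
        by_contra hzW
        exact absurd hz2 (not_lt.mpr (hM' z ⟨hzW, hz1⟩))
      · refine ⟨b, htop x, ?_, ?_⟩
        · rcases eq_or_ne x b with h | h
          · exact Or.inr h
          · exact Or.inl (lt_of_le_of_ne (htop x) h)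
        · intro z hz1 hz2
          by_contra hzW
          exact h1 ⟨z, hzW, hz1⟩
    obtain ⟨m, hm0, hm1, hm2⟩ := hleft'
    obtain ⟨M, hM0, hM1, hM2⟩ := hright'
    refine ⟨m, M, hm0, hM0, hm1, hM1, fun z h1 h2 => ?_⟩
    rcases le_total z x with h | h
    · exact hm2 z h1 h
    · exact hM2 z h h2
  -- continuity
  have hcont : Continuous f := by
    rw [continuous_iff_continuousAt]
    intro t
    rw [ContinuousAt, Filter.tendsto_def]
    intro s hs
    rw [_root_.mem_nhds_iff] at hs
    obtain ⟨W, hWs, hW, hfW⟩ := hs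
    obtain ⟨m, M, hm_le, hM_le, hm1, hM1, hMM⟩ := hINT W (f t) hW hfW
    have hup : ∃ s0, t < s0 ∧ ∀ u, u < s0 → (f u < M ∨ f u = f t) := by
      rcases hM1 with hM | hfb'
      · have hne : ¬ ∀ u, t < u → M ≤ f u := fun h => absurd (hright t M h) (not_le.mpr hM)
        push_neg at hne
        obtain ⟨s1, hts1, hMs1⟩ := hne
        exact ⟨s1, hts1, fun u hu =>
          Or.inl (lt_of_le_of_lt (hmono (le_of_lt hu)) hMs1)⟩
      · refine ⟨t + 1, by linarith, fun u hu => ?_⟩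
        rcases lt_or_eq_of_le (htop (f u)) with h | h
        · exact Or.inl (lt_of_lt_of_le (h.trans_le (hfb' ▸ hM_le)) (le_refl M))
        · exact Or.inr (h.trans hfb'.symm)
    have hdown : ∃ s1, s1 < t ∧ ∀ u, s1 < u → (m < f u ∨ f u = f t) := by
      rcases hm1 with hm | hfa'
      · have hne : ¬ ∀ u, u < t → f u ≤ m := fun h => absurd (hleft t m h) (not_le.mpr hm)
        push_neg at hne
        obtain ⟨s1, hts1, hms1⟩ := hne
        exact ⟨s1, hts1, fun u hu =>
          Or.inl (lt_of_lt_of_le hms1 (hmono (le_of_lt hu)))⟩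
      · refine ⟨t - 1, by linarith, fun u hu => ?_⟩
        rcases lt_or_eq_of_le (hbot (f u)) with h | h
        · exact Or.inl (lt_of_le_of_lt (hfa' ▸ hm_le) h)
        · exact Or.inr (h.symm.trans hfa'.symm)
    obtain ⟨s0, hts0, hup'⟩ := hup
    obtain ⟨s1, hs1t, hdown'⟩ := hdown
    apply mem_of_superset (Ioo_mem_nhds hs1t hts0)
    intro u hu
    have h1 := hup' u hu.2
    have h2 := hdown' u hu.1
    apply mem_preimage.mpr
    apply hWs
    rcases h1 with h1 | h1
    · rcases h2 with h2 | h2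
      · exact hMM (f u) h2 h1
      · rw [h2]; exact hfW
    · rw [h1]; exact hfW
  -- assembly
  have hf0 : f 0 = a := hf_le0 0 le_rfl
  have hf1 : f 1 = b := hf_ge1 1 le_rfl
  have himg : f '' Icc 0 1 = univ := by
    apply eq_univ_of_forall
    intro x
    by_contra hx
    have hxa : x ≠ a := fun h => hx ⟨0, ⟨le_rfl, zero_le_one⟩, hf0.trans h.symm⟩
    have hxb : x ≠ b := fun h => hx ⟨1, ⟨zero_le_one, le_rfl⟩, hf1.trans h.symm⟩
    have himgconn : IsPreconnected (f '' Icc 0 1) :=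
      isPreconnected_Icc.image f hcont.continuousOn
    have hsub : f '' Icc 0 1 ⊆ U x ∪ V x := by
      intro z hz
      rw [hcov' x hxa hxb]
      exact fun h => hx ((mem_singleton_iff.mp h) ▸ hz)
    have himgU : f '' Icc 0 1 ⊆ U x := by
      apply moore_aux_side (hUo x hxa hxb) (hVo x hxa hxb) himgconn hsub
      · rw [hdisj x hxa hxb, inter_empty]
      · exact ⟨a, ⟨0, ⟨le_rfl, zero_le_one⟩, hf0⟩, haU x hxa hxb⟩
    have hbb : b ∈ U x ∩ V x :=
      ⟨himgU ⟨1, ⟨zero_le_one, le_rfl⟩, hf1⟩, hbV x hxa hxb⟩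
    rw [hdisj x hxa hxb] at hbb
    exact hbb
  exact ⟨f, hcont.continuousOn, hsmono.injOn, himg, hf0, hf1⟩
end

section
/- The relation 'ε-follows' is coarsely transitive with geometric decay: if for each n ≥ 1 the arc J_{n+1} εδ^n-follows J_n, where 0 < δ ≤ 1/10, then for all n and m ≥ 0, the arc J_{n+m} (11/9)εδ^n-follows J_n (via the composition of the coarse maps). -/
open Metric Set Filter Topology

lemma follows_mono {X : Type*} [MetricSpace X] {a b : ℝ} (hab : a ≤ b) {g f : ℝ → X}
    (h : Follows a g f) : Follows b g f := by
  obtain ⟨p, hp, h0, h1, hsub⟩ := h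
  exact ⟨p, hp, h0, h1, fun s hs t ht =>
    (hsub s hs t ht).trans (thickening_mono hab _)⟩

lemma follows_refl {X : Type*} [MetricSpace X] {c : ℝ} (hc : 0 < c) (f : ℝ → X) :
    Follows c f f :=
  ⟨id, mapsTo_id _, rfl, rfl, fun s _ t _ => self_subset_thickening hc _⟩

lemma follows_trans {X : Type*} [MetricSpace X] {a b : ℝ} {f g h : ℝ → X}
    (hgf : Follows a g f) (hhg : Follows b h g) : Follows (a + b) h f := by
  obtain ⟨p, hp, hp0, hp1, hpsub⟩ := hgf
  obtain ⟨q, hq, hq0, hq1, hqsub⟩ := hhg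
  refine ⟨p ∘ q, hp.comp hq, by simp [hq0, hp0], by simp [hq1, hp1], fun s hs t ht => ?_⟩
  calc h '' uIcc s t ⊆ thickening b (g '' uIcc (q s) (q t)) := hqsub s hs t ht
    _ ⊆ thickening b (thickening a (f '' uIcc (p (q s)) (p (q t)))) :=
        thickening_subset_of_subset _ (hpsub _ (hq hs) _ (hq ht))
    _ ⊆ thickening (b + a) (f '' uIcc (p (q s)) (p (q t))) := thickening_thickening_subset _ _ _
    _ = thickening (a + b) (f '' uIcc ((p ∘ q) s) ((p ∘ q) t)) := by rw [add_comm]; rfl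

/-- Coarse transitivity of `ε`-following with geometric decay: if `J (n+1)`
`εδⁿ`-follows `J n` for all `n ≥ 1` with `0 < δ ≤ 1/10`, then `J (n+m)`
`(11/9)εδⁿ`-follows `J n`. -/
theorem stmt14 {X : Type*} [MetricSpace X] (ε δ : ℝ) (hε : 0 < ε) (hδ : 0 < δ)
    (hδ' : δ ≤ 1 / 10) (J : ℕ → ℝ → X)
    (harc : ∀ n, 1 ≤ n → IsArcParam (J n))
    (hfol : ∀ n, 1 ≤ n → Follows (ε * δ ^ n) (J (n + 1)) (J n)) :
    ∀ n, 1 ≤ n → ∀ m : ℕ, Follows (11 / 9 * ε * δ ^ n) (J (n + m)) (J n) := by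
  intro n hn m
  have key : ∀ m : ℕ, Follows (ε * δ ^ n * (1 / 9 + ∑ k ∈ Finset.range m, δ ^ k))
      (J (n + m)) (J n) := by
    intro m
    induction m with
    | zero =>
        simpa using follows_mono (le_of_eq (by ring))
          (follows_refl (by positivity : (0:ℝ) < ε * δ ^ n * (1 / 9)) (J n))
    | succ m ih =>
        have h1 : Follows (ε * δ ^ (n + m)) (J (n + m + 1)) (J (n + m)) :=
          hfol (n + m) (le_trans hn (Nat.le_add_right n m))
        have h2 := follows_trans ih h1
        have heq : ε * δ ^ n * (1 / 9 + ∑ k ∈ Finset.range m, δ ^ k) + ε * δ ^ (n + m)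
            = ε * δ ^ n * (1 / 9 + ∑ k ∈ Finset.range (m + 1), δ ^ k) := by
          rw [Finset.sum_range_succ, pow_add]; ring
        rw [heq] at h2
        simpa [Nat.add_assoc] using h2
  have hsum : ∑ k ∈ Finset.range m, δ ^ k ≤ 10 / 9 := by
    have hne : δ ≠ 1 := by linarith
    rw [geom_sum_eq hne]
    have hpow : 0 ≤ δ ^ m := by positivity
    have : δ - 1 < 0 := by linarith
    rw [div_le_iff_of_neg this]
    nlinarith
  refine follows_mono ?_ (key m)
  have : (0:ℝ) ≤ ε * δ ^ n := by positivity
  nlinarith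
end

section
/- Let x_0, ..., x_n be points in a metric space with associated compact sets V_{x_0}, ..., V_{x_n} such that V_{x_i} ∩ V_{x_{i+1}} ≠ ∅ for all i. Define r_0 = 0 and inductively r_j = max{k : V_{x_k} ∩ V_{x_{r_{j-1}}} ≠ ∅} until r_m = n. Then r_j is well-defined and strictly increasing in j, and for all i, j with j ≥ i+2, V_{x_{r_i}} ∩ V_{x_{r_j}} = ∅. -/
open Metric Set Filter Topology

/-- Loop-cutting subsequence extraction: from a chain of sets with nonempty
consecutive intersections, one extracts a strictly increasing index sequence
`r 0 = 0, …, r m = n`, each `r j` being the greatest index whose set meets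
`V (r (j-1))`, such that non-consecutive extracted sets are disjoint. -/
theorem stmt18 {X : Type*} [MetricSpace X] (n : ℕ) (V : ℕ → Set X)
    (hcpt : ∀ i ≤ n, IsCompact (V i))
    (hchain : ∀ i < n, (V i ∩ V (i + 1)).Nonempty) :
    ∃ (m : ℕ) (r : ℕ → ℕ), r 0 = 0 ∧ r m = n ∧ StrictMonoOn r (Iic m) ∧
      (∀ j, 1 ≤ j → j ≤ m →
        IsGreatest {k | k ≤ n ∧ (V k ∩ V (r (j - 1))).Nonempty} (r j)) ∧
      ∀ i j, j ≤ m → i + 2 ≤ j → V (r i) ∩ V (r j) = ∅ := by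
  classical
  rcases Nat.eq_zero_or_pos n with hn | hn
  · refine ⟨0, fun _ => 0, rfl, hn.symm, ?_, ?_, ?_⟩
    · intro a ha b hb h
      simp only [mem_Iic, Nat.le_zero] at ha hb
      omega
    · intro j h1 h0; omega
    · intro i j hj hij; omega
  -- every V i, i ≤ n, is nonempty
  have hne : ∀ i ≤ n, (V i).Nonempty := by
    intro i hi
    rcases lt_or_eq_of_le hi with h | h
    · exact (hchain i h).mono inter_subset_left
    · subst h
      have := hchain (i - 1) (by omega)
      rw [Nat.sub_add_cancel hn] at this
      exact this.mono inter_subset_right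
  set r : ℕ → ℕ := fun j =>
    Nat.rec 0 (fun _ prev => Nat.findGreatest (fun k => (V k ∩ V prev).Nonempty) n) j with hr
  have hr0 : r 0 = 0 := rfl
  have hrs : ∀ j, r (j + 1) = Nat.findGreatest (fun k => (V k ∩ V (r j)).Nonempty) n :=
    fun j => rfl
  have hle : ∀ j, r j ≤ n := by
    intro j
    cases j with
    | zero => exact Nat.zero_le n
    | succ j => exact le_of_eq_of_le (hrs j) (Nat.findGreatest_le _)
  have hgr : ∀ j, IsGreatest {k | k ≤ n ∧ (V k ∩ V (r j)).Nonempty} (r (j + 1)) := by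
    intro j
    have hwit : ((fun k => (V k ∩ V (r j)).Nonempty) (r j)) := by
      rcases hne (r j) (hle j) with ⟨x, hx⟩
      exact ⟨x, hx, hx⟩
    constructor
    · refine ⟨hle (j + 1), ?_⟩
      rw [hrs]
      exact Nat.findGreatest_spec (P := fun k => (V k ∩ V (r j)).Nonempty) (hle j) hwit
    · rintro k ⟨hk, hk'⟩
      rw [hrs]
      exact Nat.le_findGreatest hk hk'
  have hstep : ∀ j, r j < n → r j < r (j + 1) := by
    intro j hj
    have : r j + 1 ≤ r (j + 1) := by
      rw [hrs]
      refine Nat.le_findGreatest hj ?_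
      rcases hchain (r j) hj with ⟨x, hx1, hx2⟩
      exact ⟨x, hx2, hx1⟩
    omega
  have hstay : ∀ j, r j = n → r (j + 1) = n := by
    intro j hj
    have h1 : n ≤ r (j + 1) := by
      rw [hrs, hj]
      refine Nat.le_findGreatest le_rfl ?_
      rcases hne n le_rfl with ⟨x, hx⟩
      exact ⟨x, hx, hx⟩
    exact le_antisymm (hle (j + 1)) h1
  have hreach : ∃ j, r j = n := by
    have key : ∀ j, n ≤ r j ∨ j ≤ r j := by
      intro j
      induction j with
      | zero => right; exact le_rfl
      | succ j ih =>
        rcases ih with h | h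
        · left
          have := hstay j (le_antisymm (hle j) h)
          omega
        · rcases lt_or_eq_of_le (hle j) with h' | h'
          · right; have := hstep j h'; omega
          · left; have := hstay j h'; omega
    rcases key n with h | h
    · exact ⟨n, le_antisymm (hle n) h⟩
    · exact ⟨n, le_antisymm (hle n) h⟩
  set m := Nat.find hreach with hm
  have hrm : r m = n := Nat.find_spec hreach
  have hlt : ∀ j < m, r j < n := by
    intro j hj
    exact lt_of_le_of_ne (hle j) (Nat.find_min hreach hj)
  have hmono : ∀ a b, b ≤ m → a < b → r a < r b := by
    intro a b
    induction b with
    | zero => omega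
    | succ b ih =>
      intro hbm hab
      have hb : r b < r (b + 1) := hstep b (hlt b (by omega))
      rcases Nat.lt_succ_iff_lt_or_eq.mp hab with h | h
      · exact lt_trans (ih (by omega) h) hb
      · subst h; exact hb
  refine ⟨m, r, hr0, hrm, ?_, ?_, ?_⟩
  · intro a ha b hb h
    exact hmono a b hb h
  · intro j h1 h0
    have e : j - 1 + 1 = j := by omega
    have h := hgr (j - 1)
    rwa [e] at h
  · intro i j hj hij
    by_contra h
    rcases nonempty_iff_ne_empty.mpr h with ⟨x, hx1, hx2⟩
    have hub : r j ≤ r (i + 1) := (hgr i).2 ⟨hle j, ⟨x, hx2, hx1⟩⟩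
    have : r (i + 1) < r j := hmono (i + 1) j hj (by omega)
    omega
end
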